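/- arXiv:1909.08995 — 2 statements merged into one kernel-verified Lean document; each statement's English description precedes it below -/
import Mathlib

section
/- Let A and B be closed subsets of a real Hilbert space X, x̄ ∈ A ∩ B, u ∈ X, ε > 0 and q > 0. Suppose (A−u) ∩ B = ∅ and ‖u‖^q < d^q(A−u,B) + ε, where d(A−u,B) := inf{‖b−(a−u)‖ : a ∈ A, b ∈ B}. Then for any λ > 0 and η > 0 there exist points a ∈ A ∩ B_λ(x̄) and b ∈ B ∩ B_η(x̄) such that ‖b−a+u‖ > 0, ‖b−a+u‖^q < d^q(A−u,B) + ε, and q‖b−a+u‖^{q−2}·(λ·d(b−a+u, N^F_A(a)) + η·d(a−b−u, N^F_B(b))) < ε. -/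
/-- The Fréchet normal cone to `Ω` at `xbar` in a real Hilbert space (identified with its
dual): `{v : limsup_{Ω∋x→xbar, x≠xbar} ⟨v, x−xbar⟩/‖x−xbar‖ ≤ 0}`. -/
def frechetNormal {X : Type*} [NormedAddCommGroup X] [InnerProductSpace ℝ X]
    (Ω : Set X) (xbar : X) : Set X :=
  {v : X | ∀ ε > (0 : ℝ), ∃ δ > (0 : ℝ), ∀ x ∈ Ω, x ≠ xbar → ‖x - xbar‖ < δ →
    (inner ℝ v (x - xbar) : ℝ) ≤ ε * ‖x - xbar‖}

/-- The distance between two sets: `d(S,T) = inf{‖s−t‖ : s ∈ S, t ∈ T}`. -/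
noncomputable def setDist {X : Type*} [NormedAddCommGroup X] (S T : Set X) : ℝ :=
  sInf {r : ℝ | ∃ s ∈ S, ∃ t ∈ T, r = ‖s - t‖}


open Real Filter Finset

noncomputable section

/-! ### Scalar helpers -/


/-- `sq2 t s = sqrt (s^2 + t^2)`. -/
def sq2 (t s : ℝ) : ℝ := Real.sqrt (s^2 + t^2)

lemma sq2_nonneg (t s : ℝ) : 0 ≤ sq2 t s := Real.sqrt_nonneg _

lemma sq2_pos {t : ℝ} (ht : 0 < t) (s : ℝ) : 0 < sq2 t s :=
  Real.sqrt_pos.2 (by positivity)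

lemma abs_le_sq2 (t s : ℝ) : |s| ≤ sq2 t s := by
  rw [← Real.sqrt_sq_eq_abs]
  exact Real.sqrt_le_sqrt (by nlinarith [sq_nonneg t])

lemma le_sq2 (t s : ℝ) : s ≤ sq2 t s := (le_abs_self s).trans (abs_le_sq2 t s)

lemma sq2_le {t : ℝ} (ht : 0 ≤ t) (s : ℝ) : sq2 t s ≤ |s| + t := by
  rw [sq2, Real.sqrt_le_iff]
  constructor
  · positivity
  · nlinarith [abs_nonneg s, sq_abs s]

lemma sq2_zero {t : ℝ} (ht : 0 ≤ t) : sq2 t 0 = t := by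
  rw [sq2]
  have : (0:ℝ)^2 + t^2 = t^2 := by ring
  rw [this, Real.sqrt_sq_eq_abs, abs_of_nonneg ht]

lemma sq2_lip (t a b : ℝ) : |sq2 t a - sq2 t b| ≤ |a - b| := by
  have key : ∀ x y : ℝ, sq2 t x - sq2 t y ≤ |x - y| := by
    intro x y
    have h1 : sq2 t x ≤ sq2 t y + |x - y| := by
      rw [sq2, Real.sqrt_le_iff]
      have hy : |y| ≤ sq2 t y := abs_le_sq2 t y
      have hy0 : 0 ≤ sq2 t y := sq2_nonneg t y
      have hsq : (sq2 t y)^2 = y^2 + t^2 := Real.sq_sqrt (by positivity)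
      refine ⟨by positivity, ?_⟩
      have habs : |x| ≤ |y| + |x - y| := by
        calc |x| = |y + (x - y)| := by congr 1; ring
        _ ≤ |y| + |x - y| := abs_add_le _ _
      nlinarith [mul_self_le_mul_self (abs_nonneg x) habs,
        mul_le_mul_of_nonneg_right hy (abs_nonneg (x-y)),
        sq_abs x, sq_abs y, sq_abs (x-y)]
    linarith
  rw [abs_sub_le_iff]
  refine ⟨key a b, ?_⟩
  have := key b a
  rwa [abs_sub_comm] at this
lemma hasDerivAt_sq2 {t : ℝ} (ht : 0 < t) (s : ℝ) :
    HasDerivAt (sq2 t) (s / sq2 t s) s := by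
  have h0 : s^2 + t^2 ≠ 0 := by positivity
  have h1 : HasDerivAt (fun s : ℝ => s^2 + t^2) (2*s) s := by
    simpa using (hasDerivAt_pow 2 s).add_const (t^2)
  have h2 := (Real.hasDerivAt_sqrt h0).comp s h1
  refine h2.congr_deriv ?_
  rw [sq2]
  field_simp

/-! ### the smoothed max function `mm` -/

/-- smoothed max of `s` and `s'` at scale `t`. -/
def mm (t s s' : ℝ) : ℝ := (s + s' + sq2 t (s - s')) / 2

lemma le_mm_left (t s s' : ℝ) : s ≤ mm t s s' := by
  have h1 := abs_le_sq2 t (s - s')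
  have h2 := le_abs_self (s - s')
  rw [mm]; linarith

lemma le_mm_right (t s s' : ℝ) : s' ≤ mm t s s' := by
  have h1 := abs_le_sq2 t (s - s')
  have h2 := neg_abs_le (s - s')
  rw [mm]; linarith

lemma mm_self {t : ℝ} (ht : 0 ≤ t) (s : ℝ) : mm t s s = s + t/2 := by
  rw [mm]; simp [sq2_zero ht]; ring

lemma mm_lip_left (t s' a b : ℝ) : |mm t a s' - mm t b s'| ≤ |a - b| := by
  have h := sq2_lip t (a - s') (b - s')
  have h2 : (a - s') - (b - s') = a - b := by ring
  rw [h2] at h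
  rw [mm, mm]
  have : (a + s' + sq2 t (a - s')) / 2 - (b + s' + sq2 t (b - s')) / 2
      = ((a-b) + (sq2 t (a - s') - sq2 t (b - s')))/2 := by ring
  rw [this]
  have hstep : |((a-b) + (sq2 t (a - s') - sq2 t (b - s')))/2|
      ≤ (|a-b| + |sq2 t (a - s') - sq2 t (b - s')|)/2 := by
    rw [abs_div, abs_of_nonneg (by norm_num : (0:ℝ) ≤ 2)]
    have := abs_add_le (a-b) (sq2 t (a - s') - sq2 t (b - s'))
    linarith
  linarith

lemma mm_lip_right (t s a b : ℝ) : |mm t s a - mm t s b| ≤ |a - b| := by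
  have h := sq2_lip t (s - a) (s - b)
  have h2 : |(s - a) - (s - b)| = |a - b| := by
    rw [show (s - a) - (s - b) = -(a - b) by ring, abs_neg]
  rw [h2] at h
  rw [mm, mm]
  have h3 : (s + a + sq2 t (s - a)) / 2 - (s + b + sq2 t (s - b)) / 2
      = ((a-b) + (sq2 t (s - a) - sq2 t (s - b)))/2 := by ring
  rw [h3]
  have hstep : |((a-b) + (sq2 t (s - a) - sq2 t (s - b)))/2|
      ≤ (|a-b| + |sq2 t (s - a) - sq2 t (s - b)|)/2 := by
    rw [abs_div, abs_of_nonneg (by norm_num : (0:ℝ) ≤ 2)]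
    have := abs_add_le (a-b) (sq2 t (s - a) - sq2 t (s - b))
    linarith
  linarith

/-- partial derivative of `mm` in the first variable -/
def dm1 (t s s' : ℝ) : ℝ := (1 + (s - s') / sq2 t (s - s')) / 2

/-- partial derivative of `mm` in the second variable -/
def dm2 (t s s' : ℝ) : ℝ := (1 - (s - s') / sq2 t (s - s')) / 2

lemma dm1_nonneg {t : ℝ} (ht : 0 < t) (s s' : ℝ) : 0 ≤ dm1 t s s' := by
  have h1 := abs_le_sq2 t (s - s')
  have h2 := sq2_pos ht (s - s')
  rw [dm1]
  have : -1 ≤ (s - s') / sq2 t (s - s') := by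
    rw [neg_le, ← neg_div, div_le_one h2]
    linarith [neg_abs_le (s - s')]
  linarith

lemma dm2_nonneg {t : ℝ} (ht : 0 < t) (s s' : ℝ) : 0 ≤ dm2 t s s' := by
  have h1 := abs_le_sq2 t (s - s')
  have h2 := sq2_pos ht (s - s')
  rw [dm2]
  have : (s - s') / sq2 t (s - s') ≤ 1 := by
    rw [div_le_one h2]; linarith [le_abs_self (s - s')]
  linarith

lemma dm1_add_dm2 (t s s' : ℝ) : dm1 t s s' + dm2 t s s' = 1 := by
  rw [dm1, dm2]; ring

lemma hasDerivAt_mm_left {t : ℝ} (ht : 0 < t) (s' s0 : ℝ) :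
    HasDerivAt (fun s => mm t s s') (dm1 t s0 s') s0 := by
  have h1 : HasDerivAt (fun s : ℝ => s - s') 1 s0 := by
    simpa using (hasDerivAt_id s0).sub_const s'
  have h2 := (hasDerivAt_sq2 ht (s0 - s')).comp s0 h1
  have h3 : HasDerivAt (fun s : ℝ => s + s' + sq2 t (s - s'))
      (1 + (s0 - s')/sq2 t (s0 - s')) s0 := by
    have h4 : HasDerivAt (fun s : ℝ => s + s') 1 s0 := by
      simpa using (hasDerivAt_id s0).add_const s'
    have h6 := h4.add h2
    rw [mul_one] at h6
    exact h6
  have h5 := h3.div_const 2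
  exact h5

lemma hasDerivAt_mm_right {t : ℝ} (ht : 0 < t) (s s0 : ℝ) :
    HasDerivAt (fun s' => mm t s s') (dm2 t s s0) s0 := by
  have h1' : HasDerivAt (fun x : ℝ => s - x) (-1) s0 := by
    have := (hasDerivAt_const s0 s).sub (hasDerivAt_id s0)
    rw [zero_sub] at this
    exact this
  have h2 := (hasDerivAt_sq2 ht (s - s0)).comp s0 h1'
  have h3 : HasDerivAt (fun x : ℝ => s + x + sq2 t (s - x))
      (1 + (s - s0)/sq2 t (s - s0) * (-1)) s0 := by
    have h4 : HasDerivAt (fun x : ℝ => s + x) 1 s0 := by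
      simpa using (hasDerivAt_id s0).const_add s
    exact h4.add h2
  have h5 := h3.div_const 2
  refine h5.congr_deriv ?_
  rw [dm2]; ring


section VecHelpers


variable {X : Type*} [NormedAddCommGroup X] [InnerProductSpace ℝ X]

local notation "⟪" x ", " y "⟫" => @inner ℝ _ _ x y

/-- `phi t r x = sqrt (‖x‖²/r² + t²)`, a smooth approximation of `‖x‖/r`. -/
def phi (t r : ℝ) (x : X) : ℝ := Real.sqrt (‖x‖^2 / r^2 + t^2)

lemma phi_eq {t r : ℝ} (hr : 0 < r) (x : X) : phi t r x = sq2 t (‖x‖ / r) := by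
  rw [phi, sq2, div_pow]

lemma phi_pos {t : ℝ} (ht : 0 < t) (r : ℝ) (x : X) : 0 < phi t r x :=
  Real.sqrt_pos.2 (by positivity)

lemma norm_div_le_phi {t r : ℝ} (hr : 0 < r) (x : X) : ‖x‖ / r ≤ phi t r x := by
  rw [phi_eq hr]; exact le_sq2 _ _

lemma phi_zero {t r : ℝ} (ht : 0 ≤ t) (hr : 0 < r) : phi t r (0 : X) = t := by
  rw [phi_eq hr]; simp [sq2_zero ht]

lemma phi_lip {t r : ℝ} (hr : 0 < r) (x y : X) :
    |phi t r x - phi t r y| ≤ ‖x - y‖ / r := by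
  rw [phi_eq hr, phi_eq hr]
  refine (sq2_lip t _ _).trans ?_
  rw [← sub_div, abs_div, abs_of_pos hr]
  gcongr
  exact abs_norm_sub_norm_le x y

lemma hasFDerivAt_normsq (w : X) :
    HasFDerivAt (fun x : X => (‖x‖^2 : ℝ)) ((2:ℝ) • (innerSL ℝ w : X →L[ℝ] ℝ)) w := by
  have h := HasFDerivAt.inner ℝ (hasFDerivAt_id w) (hasFDerivAt_id w)
  simp only [id_eq] at h
  have hfun : (fun x : X => (⟪x, x⟫ : ℝ)) = fun x : X => (‖x‖^2 : ℝ) := by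
    funext x; exact real_inner_self_eq_norm_sq x
  rw [hfun] at h
  refine h.congr_fderiv ?_
  symm
  ext z
  simp [fderivInnerCLM_apply]
  rw [real_inner_comm]
  ring

lemma hasFDerivAt_phi {t r : ℝ} (ht : 0 < t) (hr : 0 < r) (w : X) :
    HasFDerivAt (phi t r) (((r^2 * phi t r w)⁻¹) • (innerSL ℝ w : X →L[ℝ] ℝ)) w := by
  have h1 : HasFDerivAt (fun x : X => ‖x‖^2 / r^2 + t^2)
      (((r^2)⁻¹ * 2) • (innerSL ℝ w : X →L[ℝ] ℝ)) w := by
    have h0 := (hasFDerivAt_normsq w).const_mul ((r^2)⁻¹)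
    have hfun : (fun x : X => (r^2)⁻¹ * ‖x‖^2) = fun x : X => ‖x‖^2/r^2 := by
      funext x; rw [inv_mul_eq_div]
    rw [hfun] at h0
    have := h0.add_const (t^2)
    refine this.congr_fderiv ?_
    symm
    rw [smul_smul]
  have hpos : ‖w‖^2/r^2 + t^2 > 0 := by positivity
  have h2 := (Real.hasDerivAt_sqrt (ne_of_gt hpos)).comp_hasFDerivAt w h1
  have hval : Real.sqrt (‖w‖^2/r^2 + t^2) = phi t r w := rfl
  refine h2.congr_fderiv ?_
  symm
  rw [smul_smul]
  congr 1
  rw [hval]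
  have hphi := phi_pos ht r w
  field_simp

/-- derivative of `x ↦ ‖x‖^q` (rpow) at `v ≠ 0`. -/
lemma hasFDerivAt_rpow_norm {v : X} (hv : v ≠ 0) (q : ℝ) :
    HasFDerivAt (fun x : X => ‖x‖ ^ q)
      ((q * ‖v‖ ^ (q-2)) • (innerSL ℝ v : X →L[ℝ] ℝ)) v := by
  have hv0 : (0:ℝ) < ‖v‖ := norm_pos_iff.2 hv
  have hs0 : (0:ℝ) < ‖v‖^2 := by positivity
  have h1 := hasFDerivAt_normsq v
  have h2 := (Real.hasDerivAt_rpow_const (p := q/2) (Or.inl (ne_of_gt hs0))).comp_hasFDerivAt v h1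
  have hfun : ((fun s : ℝ => s ^ (q/2)) ∘ fun x : X => (‖x‖^2 : ℝ)) = fun x : X => ‖x‖ ^ q := by
    funext x
    show ((‖x‖^(2:ℕ) : ℝ)) ^ (q/2) = ‖x‖ ^ q
    rw [← Real.rpow_natCast ‖x‖ 2, ← Real.rpow_mul (norm_nonneg x)]
    congr 1
    push_cast
    ring
  rw [hfun] at h2
  refine h2.congr_fderiv ?_
  symm
  rw [smul_smul]
  congr 1
  have : ((‖v‖^(2:ℕ) : ℝ)) ^ (q/2 - 1) = ‖v‖ ^ (q - 2) := by
    rw [← Real.rpow_natCast ‖v‖ 2, ← Real.rpow_mul (norm_nonneg v)]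
    congr 1
    push_cast
    ring
  rw [this]
  ring

/-- from `HasFDerivAt` to an `ε`-`δ` estimate with a gradient vector. -/
lemma hasfd_to_eps {f : X → ℝ} {L : X →L[ℝ] ℝ} {a : X} (w : X)
    (h : HasFDerivAt f L a) (hLw : ∀ z, L z = ⟪w, z⟫) :
    ∀ c > (0:ℝ), ∃ δ > (0:ℝ), ∀ x, ‖x - a‖ < δ →
      |f x - f a - ⟪w, x - a⟫| ≤ c * ‖x - a‖ := by
  intro c hc
  have hlo := h.isLittleO
  have := hlo.def hc
  rw [Metric.eventually_nhds_iff] at this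
  obtain ⟨δ, hδ, hd⟩ := this
  refine ⟨δ, hδ, fun x hx => ?_⟩
  have := hd (show dist x a < δ by rwa [dist_eq_norm])
  rw [← hLw]
  simpa using this


end VecHelpers

lemma sum_geom_Ico_le {r : ℝ} (h0 : 0 ≤ r) (h1 : r < 1) (n m : ℕ) :
    ∑ k ∈ Finset.Ico n m, r^k ≤ r^n / (1 - r) := by
  have h1' : (0:ℝ) < 1 - r := by linarith
  rcases le_or_gt n m with h | h
  · rw [geom_sum_Ico (by intro hr; rw [hr] at h1; linarith : r ≠ 1) h]
    have heq : (r^m - r^n) / (r - 1) = (r^n - r^m) / (1 - r) := by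
      rw [div_eq_div_iff (by linarith) (by linarith)]
      ring
    rw [heq, div_le_div_iff_of_pos_right h1']
    nlinarith [pow_nonneg h0 m]
  · rw [Finset.Ico_eq_empty (by omega)]
    simp
    apply div_nonneg (by positivity) (by linarith)

section VectorStuff2
local notation "⟪" x ", " y "⟫" => @inner ℝ _ _ x y

variable {X : Type*} [NormedAddCommGroup X] [InnerProductSpace ℝ X]

lemma zero_mem_frechetNormal (Ω : Set X) (a : X) : (0:X) ∈ frechetNormal Ω a := by
  intro ε hε
  exact ⟨1, one_pos, fun x hx hne hd => by simp; positivity⟩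

lemma frechetNormal_smul {Ω : Set X} {a : X} {w : X} (hw : w ∈ frechetNormal Ω a)
    {t : ℝ} (ht : 0 < t) : t • w ∈ frechetNormal Ω a := by
  intro ε hε
  obtain ⟨δ, hδ, h⟩ := hw (ε / t) (by positivity)
  refine ⟨δ, hδ, fun x hx hne hd => ?_⟩
  have := h x hx hne hd
  rw [real_inner_smul_left]
  calc t * ⟪w, x - a⟫ ≤ t * (ε/t * ‖x - a‖) := by
        apply mul_le_mul_of_nonneg_left this (le_of_lt ht)
  _ = ε * ‖x - a‖ := by field_simp

lemma setDist_nonneg {S T : Set X} : 0 ≤ setDist S T := by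
  apply Real.sInf_nonneg
  rintro x ⟨s, hs, t, ht, rfl⟩
  exact norm_nonneg _

lemma setDist_le {S T : Set X} {s t : X} (hs : s ∈ S) (ht : t ∈ T) :
    setDist S T ≤ ‖s - t‖ := by
  apply csInf_le
  · exact ⟨0, by rintro x ⟨s', hs', t', ht', rfl⟩; exact norm_nonneg _⟩
  · exact ⟨s, hs, t, ht, rfl⟩

/-! ### abstract Fermat rule -/

lemma fermat_abstract (A : Set X) (a1 : X) (f0 : X → ℝ) (Fa : ℕ → X → ℝ)
    (mg : X) (w : ℕ → X) (wa : X) (β t : ℕ → ℝ)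
    (hβ : Tendsto β atTop (nhds 0))
    (ht : Tendsto t atTop (nhds 0))
    (hw : Tendsto w atTop (nhds wa))
    (hmin : ∀ n, ∀ x ∈ A, f0 a1 + Fa n a1 ≤ f0 x + Fa n x + β n)
    (hf0 : ∀ c > (0:ℝ), ∃ δ > (0:ℝ), ∀ x, ‖x - a1‖ < δ →
      |f0 x - f0 a1 - ⟪mg, x - a1⟫| ≤ c * ‖x - a1‖)
    (hFd : ∀ n, ∀ c > (0:ℝ), ∃ δ > (0:ℝ), ∀ x, ‖x - a1‖ < δ →
      |Fa n x - Fa n a1 - ⟪w n, x - a1⟫| ≤ c * ‖x - a1‖)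
    (htail : ∀ n m, n ≤ m → ∀ x, Fa m x - Fa n x - (Fa m a1 - Fa n a1) ≤ t n * ‖x - a1‖) :
    (-mg - wa) ∈ frechetNormal A a1 := by
  intro ε hε
  have hε8 : 0 < ε/8 := by linarith
  -- choose K with |t K| < ε/8 and ‖w K - wa‖ < ε/8
  have h1 : ∀ᶠ n in atTop, |t n| < ε/8 := by
    have := ht.eventually (eventually_abs_sub_lt 0 hε8)
    simpa using this
  have h2 : ∀ᶠ n in atTop, ‖w n - wa‖ < ε/8 := by
    have := hw.eventually (Metric.ball_mem_nhds wa hε8)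
    simpa [Metric.mem_ball, dist_eq_norm] using this
  obtain ⟨K, hK1, hK2⟩ := (h1.and h2).exists
  obtain ⟨δ1, hδ1, hd1⟩ := hf0 (ε/8) hε8
  obtain ⟨δ2, hδ2, hd2⟩ := hFd K (ε/8) hε8
  refine ⟨min δ1 δ2, lt_min hδ1 hδ2, fun x hxA hxne hxd => ?_⟩
  have hx1 : ‖x - a1‖ < δ1 := lt_of_lt_of_le hxd (min_le_left _ _)
  have hx2 : ‖x - a1‖ < δ2 := lt_of_lt_of_le hxd (min_le_right _ _)
  have hxpos : 0 < ‖x - a1‖ := by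
    rw [norm_pos_iff]; exact sub_ne_zero.2 hxne
  -- choose n ≥ K with β n ≤ ε/8 * ‖x - a1‖
  have h3 : ∀ᶠ n in atTop, |β n| < ε/8 * ‖x - a1‖ := by
    have := hβ.eventually (eventually_abs_sub_lt 0 (by positivity : (0:ℝ) < ε/8 * ‖x - a1‖))
    simpa using this
  obtain ⟨n, hn⟩ := (h3.and (eventually_ge_atTop K)).exists
  obtain ⟨hnβ, hnK⟩ := hn
  set z := x - a1 with hz
  set N := ‖x - a1‖ with hN
  have cs : ⟪w K - wa, z⟫ ≤ ‖w K - wa‖ * N := real_inner_le_norm _ _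
  have e1 := (abs_le.1 (hd1 x hx1)).2
  have e2 := (abs_le.1 (hd2 x hx2)).2
  have e3 := hmin n x hxA
  have e4 := htail K n hnK x
  have eβ : β n ≤ ε/8 * N := le_of_lt (lt_of_le_of_lt (le_abs_self _) hnβ)
  have et : t K ≤ ε/8 := le_of_lt (lt_of_le_of_lt (le_abs_self _) hK1)
  have ew : ‖w K - wa‖ ≤ ε/8 := le_of_lt hK2
  have hsplit : (⟪-mg - wa, z⟫ : ℝ) = -⟪mg, z⟫ - ⟪wa, z⟫ := by
    rw [inner_sub_left, inner_neg_left]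
  have hsplit2 : (⟪w K - wa, z⟫ : ℝ) = ⟪w K, z⟫ - ⟪wa, z⟫ := inner_sub_left _ _ _
  have hNn : 0 ≤ N := norm_nonneg _
  have etN : t K * N ≤ ε/8 * N := mul_le_mul_of_nonneg_right et hNn
  have ewN : ‖w K - wa‖ * N ≤ ε/8 * N := mul_le_mul_of_nonneg_right ew hNn
  calc (⟪-mg - wa, z⟫ : ℝ) = -⟪mg, z⟫ - ⟪wa, z⟫ := hsplit
  _ ≤ ε * N := by nlinarith [e1, e2, e3, e4]
end VectorStuff2

/-- Bundled data for the smooth variational construction. -/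

structure VCtx (X : Type*) [NormedAddCommGroup X] [InnerProductSpace ℝ X] where
  A : Set X
  B : Set X
  hA : IsClosed A
  hB : IsClosed B
  u : X
  q : ℝ
  hq : 0 < q
  l1 : ℝ
  e1 : ℝ
  sig0 : ℝ
  dstar : ℝ
  gstar : ℝ
  hl1 : 0 < l1
  he1 : 0 < e1
  hsig0 : 0 < sig0
  hdstar : 0 < dstar
  hgstar : 0 < gstar
  z0 : X × X
  hz0 : z0 ∈ A ×ˢ B

namespace VCtx
variable {X : Type*} [NormedAddCommGroup X] [InnerProductSpace ℝ X] [CompleteSpace X] (c : VCtx X)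

def CC : Set (X × X) := c.A ×ˢ c.B
def sig : ℕ → ℝ := fun k => if k = 0 then c.sig0 else c.dstar * (1/2:ℝ)^k
def tau : ℕ → ℝ := fun k => c.gstar * (1/8:ℝ)^k / (3 * c.sig k)
def slk : ℕ → ℝ := fun n => c.gstar * (1/8:ℝ)^(n+1) / 2
def gamb : ℕ → ℝ := fun k => c.gstar * (1/8:ℝ)^k

lemma sig_pos (k : ℕ) : 0 < c.sig k := by
  rw [sig]; split
  · exact c.hsig0
  · have := c.hdstar; positivity

lemma tau_pos (k : ℕ) : 0 < c.tau k := by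
  rw [tau]; have h1 := c.sig_pos k; have := c.hgstar; positivity

lemma slk_pos (n : ℕ) : 0 < c.slk n := by
  rw [slk]; have := c.hgstar; positivity

lemma gamb_pos (k : ℕ) : 0 < c.gamb k := by
  rw [gamb]; have := c.hgstar; positivity

lemma sig_mul_tau (k : ℕ) : c.sig k * (3/2 * c.tau k) = c.gamb k / 2 := by
  rw [tau, gamb]
  have h := (c.sig_pos k).ne'
  field_simp

lemma slk_eq (n : ℕ) : c.slk n = c.gamb (n+1) / 2 := by rw [slk, gamb]

lemma sig_succ (n : ℕ) : c.sig (n+1) = c.dstar * (1/2:ℝ)^(n+1) := by rw [sig]; simp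

lemma sum_sig_Ico_le (n m : ℕ) :
    ∑ k ∈ Finset.Ico (n+1) (m+1), c.sig k ≤ c.dstar * (1/2:ℝ)^n := by
  have heq : ∑ k ∈ Finset.Ico (n+1) (m+1), c.sig k
      = c.dstar * ∑ k ∈ Finset.Ico (n+1) (m+1), (1/2:ℝ)^k := by
    rw [Finset.mul_sum]
    apply Finset.sum_congr rfl
    intro k hk
    have : k ≠ 0 := by
      have := (Finset.mem_Ico.1 hk).1; omega
    rw [sig]; simp [this]
  rw [heq]
  have hb := sum_geom_Ico_le (by norm_num : (0:ℝ) ≤ 1/2) (by norm_num) (n+1) (m+1)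
  have h2 : ((1/2:ℝ))^(n+1) / (1 - 1/2) = (1/2:ℝ)^n := by
    rw [pow_succ]; ring
  rw [h2] at hb
  have := c.hdstar
  nlinarith

lemma gamb_Ico_le (n m : ℕ) :
    ∑ k ∈ Finset.Ico (n+1) (m+1), c.gamb k ≤ c.gstar * (1/8:ℝ)^n / 7 := by
  have heq : ∑ k ∈ Finset.Ico (n+1) (m+1), c.gamb k
      = c.gstar * ∑ k ∈ Finset.Ico (n+1) (m+1), (1/8:ℝ)^k := by
    rw [Finset.mul_sum]; rfl
  rw [heq]
  have hb := sum_geom_Ico_le (by norm_num : (0:ℝ) ≤ 1/8) (by norm_num) (n+1) (m+1)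
  have h2 : ((1/8:ℝ))^(n+1) / (1 - 1/8) = (1/8:ℝ)^n / 7 := by
    rw [pow_succ]; ring
  rw [h2] at hb
  have := c.hgstar
  have h3 : (0:ℝ) ≤ (1/8:ℝ)^n := by positivity
  calc c.gstar * ∑ k ∈ Finset.Ico (n+1) (m+1), (1/8:ℝ)^k
      ≤ c.gstar * ((1/8:ℝ)^n / 7) := by
        apply mul_le_mul_of_nonneg_left hb this.le
  _ = c.gstar * (1/8:ℝ)^n / 7 := by ring

lemma sum_sig_le (n : ℕ) : ∑ k ∈ Finset.range (n+1), c.sig k ≤ c.sig0 + c.dstar := by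
  have h1 : (1:ℕ) ≤ n+1 := by omega
  have hsub := Finset.sum_Ico_eq_sub c.sig h1
  have hone : ∑ k ∈ Finset.range 1, c.sig k = c.sig 0 := Finset.sum_range_one (f := c.sig)
  have hico := c.sum_sig_Ico_le 0 n
  simp only [Nat.zero_add, pow_zero, mul_one] at hico
  have : ∑ k ∈ Finset.range (n+1), c.sig k
      = c.sig 0 + ∑ k ∈ Finset.Ico 1 (n+1), c.sig k := by
    rw [hsub, hone]; ring
  rw [this]
  have hsig00 : c.sig 0 = c.sig0 := by rw [sig]; simp
  rw [hsig00]
  linarith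

def fval (z : X × X) : ℝ := ‖z.2 - z.1 + c.u‖ ^ c.q
def P (k : ℕ) (w : X × X) : ℝ :=
  mm (c.tau k) (phi (c.tau k) c.l1 w.1) (phi (c.tau k) c.e1 w.2)
def Sg (f : ℕ → X × X) (n : ℕ) (z : X × X) : ℝ :=
  c.fval z + ∑ k ∈ Finset.range (n+1), c.sig k * c.P k (z - f k)
def Vg (f : ℕ → X × X) (n : ℕ) : ℝ := sInf (c.Sg f n '' c.CC)

lemma fval_nonneg (z : X × X) : 0 ≤ c.fval z := Real.rpow_nonneg (norm_nonneg _) _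

lemma P_nonneg (k : ℕ) (w : X × X) : 0 ≤ c.P k w := by
  refine le_trans ?_ (le_mm_left _ _ _)
  exact Real.sqrt_nonneg _

lemma P_ge (k : ℕ) (w : X × X) :
    max (‖w.1‖ / c.l1) (‖w.2‖ / c.e1) ≤ c.P k w := by
  apply max_le
  · exact (norm_div_le_phi c.hl1 _).trans (le_mm_left _ _ _)
  · exact (norm_div_le_phi c.he1 _).trans (le_mm_right _ _ _)

lemma P_zero (k : ℕ) : c.P k 0 = 3/2 * c.tau k := by
  rw [P]
  have ht := (c.tau_pos k).le
  show mm _ (phi _ _ (0:X)) (phi _ _ (0:X)) = _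
  rw [phi_zero ht c.hl1, phi_zero ht c.he1, mm_self ht]
  ring

lemma Sg_nonneg (f : ℕ → X × X) (n : ℕ) (z : X × X) : 0 ≤ c.Sg f n z := by
  rw [Sg]
  apply add_nonneg (c.fval_nonneg z)
  apply Finset.sum_nonneg
  intro k _
  exact mul_nonneg (c.sig_pos k).le (c.P_nonneg k _)

lemma CC_nonempty : c.CC.Nonempty := ⟨c.z0, c.hz0⟩

lemma exists_pick (f : ℕ → X × X) (n : ℕ) :
    ∃ z, z ∈ c.CC ∧ c.Sg f n z ≤ c.Vg f n + c.slk n := by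
  obtain ⟨r, hr, hlt⟩ := Real.lt_sInf_add_pos (c.CC_nonempty.image (c.Sg f n)) (c.slk_pos n)
  obtain ⟨z, hz, rfl⟩ := hr
  exact ⟨z, hz, le_of_lt hlt⟩

def pick (f : ℕ → X × X) (n : ℕ) : X × X := (c.exists_pick f n).choose

lemma pick_mem (f : ℕ → X × X) (n : ℕ) : c.pick f n ∈ c.CC :=
  (c.exists_pick f n).choose_spec.1

lemma pick_le (f : ℕ → X × X) (n : ℕ) :
    c.Sg f n (c.pick f n) ≤ c.Vg f n + c.slk n :=
  (c.exists_pick f n).choose_spec.2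

def zs : ℕ → X × X
  | 0 => c.z0
  | n+1 => c.pick (fun k => zs (min k n)) n
  decreasing_by exact Nat.lt_succ_of_le (min_le_right k n)

lemma Sg_congr {f g : ℕ → X × X} (n : ℕ) (h : ∀ k ≤ n, f k = g k) :
    c.Sg f n = c.Sg g n := by
  funext z
  rw [Sg, Sg]
  congr 1
  apply Finset.sum_congr rfl
  intro k hk
  have hk' : k ≤ n := Nat.lt_succ_iff.1 (Finset.mem_range.1 hk)
  rw [h k hk']

lemma zs_mem (n : ℕ) : c.zs n ∈ c.CC := by
  cases n with
  | zero => rw [zs]; exact c.hz0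
  | succ n => rw [zs]; exact c.pick_mem _ n

def S (n : ℕ) (z : X × X) : ℝ := c.Sg c.zs n z
def V (n : ℕ) : ℝ := c.Vg c.zs n

lemma S_pick (n : ℕ) : c.S n (c.zs (n+1)) ≤ c.V n + c.slk n := by
  have heq : c.Sg (fun k => c.zs (min k n)) n = c.Sg c.zs n := by
    apply c.Sg_congr
    intro k hk
    rw [min_eq_left hk]
  have h := c.pick_le (fun k => c.zs (min k n)) n
  rw [heq] at h
  have hV : c.Vg (fun k => c.zs (min k n)) n = sInf (c.Sg c.zs n '' c.CC) := by
    rw [Vg, heq]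
  have hz : c.zs (n+1) = c.pick (fun k => c.zs (min k n)) n := by rw [zs]
  rw [S, V, Vg, hz, ← hV]
  exact h

lemma S_nonneg (n : ℕ) (z : X × X) : 0 ≤ c.S n z := c.Sg_nonneg _ n z

lemma V_le_S (n : ℕ) {z : X × X} (hz : z ∈ c.CC) : c.V n ≤ c.S n z := by
  apply csInf_le
  · exact ⟨0, by rintro r ⟨w, hw, rfl⟩; exact c.S_nonneg n w⟩
  · exact ⟨z, hz, rfl⟩

lemma S_mono {n m : ℕ} (h : n ≤ m) (z : X × X) : c.S n z ≤ c.S m z := by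
  rw [S, S, Sg, Sg]
  have : ∑ k ∈ Finset.range (n+1), c.sig k * c.P k (z - c.zs k)
      ≤ ∑ k ∈ Finset.range (m+1), c.sig k * c.P k (z - c.zs k) := by
    apply Finset.sum_le_sum_of_subset_of_nonneg (Finset.range_subset_range.2 (by omega))
    intro i _ _
    exact mul_nonneg (c.sig_pos i).le (c.P_nonneg i _)
  linarith

lemma V_mono : Monotone c.V := by
  intro n m h
  apply le_csInf ((c.CC_nonempty).image _)
  rintro r ⟨z, hz, rfl⟩
  exact (c.V_le_S n hz).trans (c.S_mono h z)

lemma S_split (n : ℕ) (z : X × X) :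
    c.S (n+1) z = c.S n z + c.sig (n+1) * c.P (n+1) (z - c.zs (n+1)) := by
  rw [S, S, Sg, Sg, Finset.sum_range_succ]
  ring

lemma V_step (n : ℕ) : c.V (n+1) ≤ c.V n + c.gamb (n+1) := by
  have h1 := c.V_le_S (n+1) (c.zs_mem (n+1))
  have h2 := c.S_pick n
  have h3 := c.S_split n (c.zs (n+1))
  rw [sub_self] at h3
  rw [c.P_zero (n+1)] at h3
  have h4 : c.sig (n+1) * (3/2 * c.tau (n+1)) = c.gamb (n+1) / 2 := c.sig_mul_tau (n+1)
  have h5 : c.slk n = c.gamb (n+1) / 2 := c.slk_eq n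
  calc c.V (n+1) ≤ c.S (n+1) (c.zs (n+1)) := h1
  _ = c.S n (c.zs (n+1)) + c.sig (n+1) * (3/2 * c.tau (n+1)) := by rw [h3]
  _ ≤ c.V n + c.slk n + c.gamb (n+1)/2 := by rw [h4]; linarith
  _ = c.V n + c.gamb (n+1) := by rw [h5]; ring

lemma V_chain : ∀ n m, n ≤ m →
    c.V m ≤ c.V n + ∑ k ∈ Finset.Ico (n+1) (m+1), c.gamb k := by
  intro n m h
  induction m with
  | zero =>
    have : n = 0 := by omega
    subst this; simp
  | succ m ih =>
    rcases Nat.lt_or_ge n (m+1) with h' | h'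
    · have hn : n ≤ m := by omega
      have := ih hn
      have hstep := c.V_step m
      have hsum : ∑ k ∈ Finset.Ico (n+1) (m+1+1), c.gamb k
          = ∑ k ∈ Finset.Ico (n+1) (m+1), c.gamb k + c.gamb (m+1) := by
        rw [Finset.sum_Ico_succ_top (by omega)]
      rw [hsum]
      linarith
    · have : n = m+1 := by omega
      subst this; simp

lemma V_chain' (n m : ℕ) (h : n ≤ m) : c.V m ≤ c.V n + c.gstar * (1/8:ℝ)^n := by
  have h1 := c.V_chain n m h
  have h2 := c.gamb_Ico_le n m
  have h3 : c.gstar * (1/8:ℝ)^n / 7 ≤ c.gstar * (1/8:ℝ)^n := by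
    have := c.hgstar
    have : (0:ℝ) ≤ c.gstar * (1/8:ℝ)^n := by positivity
    linarith
  linarith

lemma zs_zero : c.zs 0 = c.z0 := by rw [zs]

lemma V0_le : c.V 0 ≤ c.fval c.z0 + c.gstar / 2 := by
  have h1 := c.V_le_S 0 c.hz0
  have h2 : c.S 0 c.z0 = c.fval c.z0 + c.sig 0 * (3/2 * c.tau 0) := by
    rw [S, Sg, Finset.sum_range_one, c.zs_zero, sub_self, c.P_zero 0]
  have h3 := c.sig_mul_tau 0
  rw [gamb] at h3
  simp at h3
  rw [h2, h3] at h1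
  linarith

lemma V_le_all (n : ℕ) : c.V n ≤ c.fval c.z0 + c.gstar := by
  have h1 := c.V_chain 0 n (by omega)
  have h2 := c.gamb_Ico_le 0 n
  norm_num at h2
  have h3 := c.V0_le
  have := c.hgstar
  linarith

def Vsup : ℝ := ⨆ n, c.V n

lemma V_bddAbove : BddAbove (Set.range c.V) := by
  refine ⟨c.fval c.z0 + c.gstar, ?_⟩
  rintro r ⟨n, rfl⟩
  exact c.V_le_all n

lemma V_le_Vsup (n : ℕ) : c.V n ≤ c.Vsup := le_ciSup c.V_bddAbove n

lemma Vsup_le (n : ℕ) : c.Vsup ≤ c.V n + c.gstar * (1/8:ℝ)^n := by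
  apply ciSup_le
  intro m
  rcases le_or_gt m n with h | h
  · have h1 := c.V_mono h
    have : (0:ℝ) ≤ c.gstar * (1/8:ℝ)^n := by have := c.hgstar; positivity
    linarith
  · exact c.V_chain' n m h.le

lemma Vsup_le_all : c.Vsup ≤ c.fval c.z0 + c.gstar := by
  apply ciSup_le; exact c.V_le_all

/-- localization estimate -/
lemma loc (n : ℕ) {z : X × X} (hz : z ∈ c.CC) :
    c.sig (n+1) * max (‖(z - c.zs (n+1)).1‖ / c.l1) (‖(z - c.zs (n+1)).2‖ / c.e1)
      ≤ c.S (n+1) z - c.V (n+1) + c.gamb (n+1) := by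
  have h1 : c.sig (n+1) * max (‖(z - c.zs (n+1)).1‖ / c.l1) (‖(z - c.zs (n+1)).2‖ / c.e1)
      ≤ c.sig (n+1) * c.P (n+1) (z - c.zs (n+1)) := by
    apply mul_le_mul_of_nonneg_left (c.P_ge (n+1) _) (c.sig_pos (n+1)).le
  have h2 := c.S_split n z
  have h3 := c.V_le_S n hz
  have h4 := c.V_step n
  linarith

lemma S_at_zs (n m : ℕ) (h : n ≤ m) : c.S n (c.zs (m+1)) ≤ c.Vsup + c.slk m := by
  have h1 := c.S_mono h (c.zs (m+1))
  have h2 := c.S_pick m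
  have h3 := c.V_le_Vsup m
  linarith

lemma dist_zs (n m : ℕ) (h : n ≤ m) :
    max (‖(c.zs (m+1) - c.zs (n+1)).1‖ / c.l1) (‖(c.zs (m+1) - c.zs (n+1)).2‖ / c.e1)
      ≤ (3 * c.gstar / c.dstar) * (1/4:ℝ)^(n+1) := by
  rcases eq_or_lt_of_le h with rfl | h'
  · have hz : c.zs (n+1) - c.zs (n+1) = 0 := sub_self _
    rw [hz]
    have := c.hgstar; have := c.hdstar
    simp
    positivity
  · have hm : n + 1 ≤ m := h'
    have h1 := c.loc n (c.zs_mem (m+1))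
    have h2 := c.S_at_zs (n+1) m hm
    have h3 := c.Vsup_le (n+1)
    have hslk : c.slk m ≤ c.gstar * (1/8:ℝ)^(n+1) := by
      rw [slk]
      have hp : ((1:ℝ)/8)^(m+1) ≤ (1/8:ℝ)^(n+1) := by
        apply pow_le_pow_of_le_one (by norm_num) (by norm_num) (by omega)
      have hg := c.hgstar
      have h8 := mul_le_mul_of_nonneg_left hp hg.le
      have h9 : (0:ℝ) ≤ c.gstar * (1/8:ℝ)^(m+1) := by positivity
      linarith
    have hgam : c.gamb (n+1) = c.gstar * (1/8:ℝ)^(n+1) := rfl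
    have hN : c.sig (n+1) * max (‖(c.zs (m+1) - c.zs (n+1)).1‖ / c.l1)
        (‖(c.zs (m+1) - c.zs (n+1)).2‖ / c.e1) ≤ 3 * (c.gstar * (1/8:ℝ)^(n+1)) := by
      rw [hgam] at h1
      linarith
    have hsig := c.sig_succ n
    rw [hsig] at hN
    have hd := c.hdstar
    have hhalf : (0:ℝ) < (1/2:ℝ)^(n+1) := by positivity
    rw [div_mul_eq_mul_div, le_div_iff₀ hd]
    have key : c.dstar * (1/2:ℝ)^(n+1) * max (‖(c.zs (m+1) - c.zs (n+1)).1‖ / c.l1)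
        (‖(c.zs (m+1) - c.zs (n+1)).2‖ / c.e1) ≤ 3 * (c.gstar * (1/8:ℝ)^(n+1)) := hN
    have hpow : ((1:ℝ)/8)^(n+1) = (1/4:ℝ)^(n+1) * (1/2:ℝ)^(n+1) := by
      rw [← mul_pow]; norm_num
    rw [hpow] at key
    have hmax : (0:ℝ) ≤ max (‖(c.zs (m+1) - c.zs (n+1)).1‖ / c.l1)
        (‖(c.zs (m+1) - c.zs (n+1)).2‖ / c.e1) := by
      have hl := c.hl1
      apply le_max_of_le_left; positivity
    nlinarith

lemma norm_le_max (w : X × X) :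
    ‖w‖ ≤ max c.l1 c.e1 * max (‖w.1‖ / c.l1) (‖w.2‖ / c.e1) := by
  have hl := c.hl1; have he := c.he1
  rw [Prod.norm_def]
  apply max_le
  · calc ‖w.1‖ = c.l1 * (‖w.1‖ / c.l1) := by field_simp
    _ ≤ max c.l1 c.e1 * max (‖w.1‖ / c.l1) (‖w.2‖ / c.e1) :=
        mul_le_mul (le_max_left _ _) (le_max_left _ _) (by positivity)
          (le_trans hl.le (le_max_left _ _))
  · calc ‖w.2‖ = c.e1 * (‖w.2‖ / c.e1) := by field_simp
    _ ≤ max c.l1 c.e1 * max (‖w.1‖ / c.l1) (‖w.2‖ / c.e1) :=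
        mul_le_mul (le_max_right _ _) (le_max_right _ _) (by positivity)
          (le_trans hl.le (le_max_left _ _))

lemma dist_zs' (n m : ℕ) (h : n ≤ m) :
    dist (c.zs (m+1)) (c.zs (n+1))
      ≤ (max c.l1 c.e1 * (3 * c.gstar / c.dstar)) * (1/4:ℝ)^(n+1) := by
  rw [dist_eq_norm]
  calc ‖c.zs (m+1) - c.zs (n+1)‖
      ≤ max c.l1 c.e1 * max (‖(c.zs (m+1) - c.zs (n+1)).1‖ / c.l1)
        (‖(c.zs (m+1) - c.zs (n+1)).2‖ / c.e1) := c.norm_le_max _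
  _ ≤ max c.l1 c.e1 * ((3 * c.gstar / c.dstar) * (1/4:ℝ)^(n+1)) := by
      apply mul_le_mul_of_nonneg_left (c.dist_zs n m h)
      have := c.hl1; positivity
  _ = (max c.l1 c.e1 * (3 * c.gstar / c.dstar)) * (1/4:ℝ)^(n+1) := by ring

lemma cauchy_zs : CauchySeq c.zs := by
  rw [Metric.cauchySeq_iff']
  intro ε hε
  set Cc := max c.l1 c.e1 * (3 * c.gstar / c.dstar) with hCc
  have hCc0 : 0 < Cc := by
    have h1 := c.hl1; have h2 := c.hgstar; have h3 := c.hdstar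
    have h4 : 0 < max c.l1 c.e1 := lt_of_lt_of_le h1 (le_max_left _ _)
    exact mul_pos h4 (by positivity)
  obtain ⟨K, hK⟩ := exists_pow_lt_of_lt_one (show (0:ℝ) < ε / Cc by positivity)
    (show (1/4:ℝ) < 1 by norm_num)
  refine ⟨K + 1, fun n hn => ?_⟩
  obtain ⟨m, rfl⟩ : ∃ m, n = m + 1 := ⟨n - 1, by omega⟩
  have hKm : K ≤ m := by omega
  have h1 := c.dist_zs' K m hKm
  have h2 : ((1:ℝ)/4)^(K+1) ≤ (1/4:ℝ)^K := by
    apply pow_le_pow_of_le_one (by norm_num) (by norm_num) (by omega)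
  have h3 : Cc * (1/4:ℝ)^K < Cc * (ε / Cc) := by
    apply mul_lt_mul_of_pos_left hK hCc0
  have h4 : Cc * (ε / Cc) = ε := by field_simp
  calc dist (c.zs (m+1)) (c.zs (K+1)) ≤ Cc * (1/4:ℝ)^(K+1) := h1
  _ ≤ Cc * (1/4:ℝ)^K := by apply mul_le_mul_of_nonneg_left h2 hCc0.le
  _ < ε := by rw [← h4]; exact h3

/-- the limit point -/
def ylim : X × X := (cauchySeq_tendsto_of_complete c.cauchy_zs).choose

lemma ylim_tendsto : Tendsto c.zs atTop (nhds c.ylim) :=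
  (cauchySeq_tendsto_of_complete c.cauchy_zs).choose_spec

lemma CC_closed : IsClosed c.CC := c.hA.prod c.hB

lemma ylim_mem : c.ylim ∈ c.CC :=
  c.CC_closed.mem_of_tendsto c.ylim_tendsto (Eventually.of_forall c.zs_mem)

lemma fval_continuous : Continuous c.fval := by
  have h1 : Continuous (fun z : X × X => ‖z.2 - z.1 + c.u‖) := by
    continuity
  have h2 : Continuous (fun s : ℝ => s ^ c.q) := by
    rw [continuous_iff_continuousAt]
    intro x
    exact Real.continuousAt_rpow_const x c.q (Or.inr c.hq.le)
  exact h2.comp h1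

lemma P_continuous (k : ℕ) (w0 : X × X) :
    Continuous (fun z : X × X => c.P k (z - w0)) := by
  have hphi : ∀ (r : ℝ), Continuous (fun x : X => phi (c.tau k) r x) := by
    intro r
    apply Real.continuous_sqrt.comp
    continuity
  have h1 : Continuous (fun z : X × X => phi (c.tau k) c.l1 (z.1 - w0.1)) := by
    apply (hphi c.l1).comp
    continuity
  have h2 : Continuous (fun z : X × X => phi (c.tau k) c.e1 (z.2 - w0.2)) := by
    apply (hphi c.e1).comp
    continuity
  have hmm : Continuous (fun p : ℝ × ℝ => mm (c.tau k) p.1 p.2) := by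
    unfold mm sq2
    apply Continuous.div_const
    apply Continuous.add (by continuity)
    apply Real.continuous_sqrt.comp
    continuity
  exact hmm.comp (h1.prodMk h2)

lemma S_continuous (n : ℕ) : Continuous (c.S n) := by
  unfold S Sg
  apply Continuous.add c.fval_continuous
  apply continuous_finset_sum
  intro k _
  exact continuous_const.mul (c.P_continuous k (c.zs k))

lemma S_y_le (n : ℕ) : c.S n c.ylim ≤ c.Vsup := by
  have hcont : Tendsto (fun m => c.S n (c.zs (m+1))) atTop (nhds (c.S n c.ylim)) := by
    apply ((c.S_continuous n).continuousAt.tendsto).comp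
    exact c.ylim_tendsto.comp (tendsto_add_atTop_nat 1)
  have hrhs : Tendsto (fun m => c.Vsup + c.slk m) atTop (nhds (c.Vsup + 0)) := by
    apply Tendsto.const_add
    unfold slk
    have h8 : Tendsto (fun m : ℕ => ((1:ℝ)/8)^(m+1)) atTop (nhds 0) := by
      have := (tendsto_pow_atTop_nhds_zero_of_lt_one (by norm_num : (0:ℝ) ≤ 1/8)
        (by norm_num : (1/8:ℝ) < 1)).comp (tendsto_add_atTop_nat 1)
      exact this
    have := (h8.const_mul c.gstar).div_const 2
    simpa using this
  rw [add_zero] at hrhs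
  apply le_of_tendsto_of_tendsto hcont hrhs
  filter_upwards [eventually_ge_atTop n] with m hm
  exact c.S_at_zs n m hm

lemma fermat_min (n : ℕ) {z : X × X} (hz : z ∈ c.CC) :
    c.S n c.ylim ≤ c.S n z + c.gstar * (1/8:ℝ)^n := by
  have h1 := c.S_y_le n
  have h2 := c.Vsup_le n
  have h3 := c.V_le_S n hz
  linarith

lemma fval_y_le : c.fval c.ylim ≤ c.fval c.z0 + c.gstar := by
  have h1 : c.fval c.ylim ≤ c.S 0 c.ylim := by
    rw [S, Sg]
    have : 0 ≤ ∑ k ∈ Finset.range 1, c.sig k * c.P k (c.ylim - c.zs k) := by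
      apply Finset.sum_nonneg
      intro k _
      exact mul_nonneg (c.sig_pos k).le (c.P_nonneg k _)
    linarith
  exact h1.trans ((c.S_y_le 0).trans c.Vsup_le_all)

lemma ball_est :
    c.sig0 * max (‖(c.ylim - c.z0).1‖ / c.l1) (‖(c.ylim - c.z0).2‖ / c.e1)
      ≤ c.fval c.z0 + c.gstar - c.fval c.ylim := by
  have h1 : c.sig 0 * max (‖(c.ylim - c.z0).1‖ / c.l1) (‖(c.ylim - c.z0).2‖ / c.e1)
      ≤ c.sig 0 * c.P 0 (c.ylim - c.z0) :=
    mul_le_mul_of_nonneg_left (c.P_ge 0 _) (c.sig_pos 0).le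
  have h2 : c.S 0 c.ylim = c.fval c.ylim + c.sig 0 * c.P 0 (c.ylim - c.z0) := by
    rw [S, Sg, Finset.sum_range_one, c.zs_zero]
  have h3 := (c.S_y_le 0).trans c.Vsup_le_all
  have hsig00 : c.sig 0 = c.sig0 := by rw [sig]; simp
  rw [hsig00] at h1
  rw [hsig00] at h2
  linarith

/-! ### gradient vectors and the Fermat rule -/

def vvec : X := c.ylim.2 - c.ylim.1 + c.u
def sk (k : ℕ) : ℝ := phi (c.tau k) c.l1 (c.ylim.1 - (c.zs k).1)
def tk (k : ℕ) : ℝ := phi (c.tau k) c.e1 (c.ylim.2 - (c.zs k).2)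
def Avec (k : ℕ) : X :=
  (dm1 (c.tau k) (c.sk k) (c.tk k) * (c.l1^2 * c.sk k)⁻¹) • (c.ylim.1 - (c.zs k).1)
def Bvec (k : ℕ) : X :=
  (dm2 (c.tau k) (c.sk k) (c.tk k) * (c.e1^2 * c.tk k)⁻¹) • (c.ylim.2 - (c.zs k).2)
def wan (n : ℕ) : X := ∑ k ∈ Finset.range (n+1), c.sig k • c.Avec k
def wbn (n : ℕ) : X := ∑ k ∈ Finset.range (n+1), c.sig k • c.Bvec k

lemma sk_pos (k : ℕ) : 0 < c.sk k := phi_pos (c.tau_pos k) _ _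
lemma tk_pos (k : ℕ) : 0 < c.tk k := phi_pos (c.tau_pos k) _ _
lemma dm1k_nonneg (k : ℕ) : 0 ≤ dm1 (c.tau k) (c.sk k) (c.tk k) :=
  dm1_nonneg (c.tau_pos k) _ _
lemma dm2k_nonneg (k : ℕ) : 0 ≤ dm2 (c.tau k) (c.sk k) (c.tk k) :=
  dm2_nonneg (c.tau_pos k) _ _
lemma dm1k_le_one (k : ℕ) : dm1 (c.tau k) (c.sk k) (c.tk k) ≤ 1 := by
  have := dm1_add_dm2 (c.tau k) (c.sk k) (c.tk k)
  have := c.dm2k_nonneg k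
  linarith
lemma dm2k_le_one (k : ℕ) : dm2 (c.tau k) (c.sk k) (c.tk k) ≤ 1 := by
  have := dm1_add_dm2 (c.tau k) (c.sk k) (c.tk k)
  have := c.dm1k_nonneg k
  linarith

lemma norm_Avec (k : ℕ) : ‖c.Avec k‖ ≤ dm1 (c.tau k) (c.sk k) (c.tk k) / c.l1 := by
  rw [Avec, norm_smul]
  set w := c.ylim.1 - (c.zs k).1
  have hsk := c.sk_pos k
  have hl := c.hl1
  have hd1 := c.dm1k_nonneg k
  have hco : |dm1 (c.tau k) (c.sk k) (c.tk k) * (c.l1^2 * c.sk k)⁻¹|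
      = dm1 (c.tau k) (c.sk k) (c.tk k) * (c.l1^2 * c.sk k)⁻¹ := by
    apply abs_of_nonneg
    positivity
  rw [Real.norm_eq_abs, hco]
  have hw : ‖w‖ ≤ c.l1 * c.sk k := by
    have := norm_div_le_phi (t := c.tau k) hl (x := w)
    rw [div_le_iff₀ hl] at this
    calc ‖w‖ ≤ c.sk k * c.l1 := this
    _ = c.l1 * c.sk k := by ring
  rw [mul_assoc, div_eq_mul_inv]
  apply mul_le_mul_of_nonneg_left ?_ hd1
  rw [inv_mul_le_iff₀ (by positivity)]
  calc ‖w‖ ≤ c.l1 * c.sk k := hw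
  _ = c.l1 ^ 2 * c.sk k * c.l1⁻¹ := by field_simp

lemma norm_Bvec (k : ℕ) : ‖c.Bvec k‖ ≤ dm2 (c.tau k) (c.sk k) (c.tk k) / c.e1 := by
  rw [Bvec, norm_smul]
  set w := c.ylim.2 - (c.zs k).2
  have hsk := c.tk_pos k
  have hl := c.he1
  have hd1 := c.dm2k_nonneg k
  have hco : |dm2 (c.tau k) (c.sk k) (c.tk k) * (c.e1^2 * c.tk k)⁻¹|
      = dm2 (c.tau k) (c.sk k) (c.tk k) * (c.e1^2 * c.tk k)⁻¹ := by
    apply abs_of_nonneg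
    positivity
  rw [Real.norm_eq_abs, hco]
  have hw : ‖w‖ ≤ c.e1 * c.tk k := by
    have := norm_div_le_phi (t := c.tau k) hl (x := w)
    rw [div_le_iff₀ hl] at this
    calc ‖w‖ ≤ c.tk k * c.e1 := this
    _ = c.e1 * c.tk k := by ring
  rw [mul_assoc, div_eq_mul_inv]
  apply mul_le_mul_of_nonneg_left ?_ hd1
  rw [inv_mul_le_iff₀ (by positivity)]
  calc ‖w‖ ≤ c.e1 * c.tk k := hw
  _ = c.e1 ^ 2 * c.tk k * c.e1⁻¹ := by field_simp

lemma norm_Avec' (k : ℕ) : ‖c.Avec k‖ ≤ 1 / c.l1 := by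
  refine (c.norm_Avec k).trans ?_
  have := c.hl1
  gcongr
  exact c.dm1k_le_one k

lemma norm_Bvec' (k : ℕ) : ‖c.Bvec k‖ ≤ 1 / c.e1 := by
  refine (c.norm_Bvec k).trans ?_
  have := c.he1
  gcongr
  exact c.dm2k_le_one k

lemma wsum_bound (n : ℕ) :
    c.l1 * ‖c.wan n‖ + c.e1 * ‖c.wbn n‖ ≤ ∑ k ∈ Finset.range (n+1), c.sig k := by
  have hl := c.hl1; have he := c.he1
  have h1 : ‖c.wan n‖ ≤ ∑ k ∈ Finset.range (n+1),
      c.sig k * (dm1 (c.tau k) (c.sk k) (c.tk k) / c.l1) := by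
    rw [wan]
    refine (norm_sum_le _ _).trans ?_
    apply Finset.sum_le_sum
    intro k _
    rw [norm_smul, Real.norm_eq_abs, abs_of_nonneg (c.sig_pos k).le]
    exact mul_le_mul_of_nonneg_left (c.norm_Avec k) (c.sig_pos k).le
  have h2 : ‖c.wbn n‖ ≤ ∑ k ∈ Finset.range (n+1),
      c.sig k * (dm2 (c.tau k) (c.sk k) (c.tk k) / c.e1) := by
    rw [wbn]
    refine (norm_sum_le _ _).trans ?_
    apply Finset.sum_le_sum
    intro k _
    rw [norm_smul, Real.norm_eq_abs, abs_of_nonneg (c.sig_pos k).le]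
    exact mul_le_mul_of_nonneg_left (c.norm_Bvec k) (c.sig_pos k).le
  have h3 : c.l1 * ‖c.wan n‖ ≤ ∑ k ∈ Finset.range (n+1),
      c.sig k * dm1 (c.tau k) (c.sk k) (c.tk k) := by
    calc c.l1 * ‖c.wan n‖ ≤ c.l1 * ∑ k ∈ Finset.range (n+1),
        c.sig k * (dm1 (c.tau k) (c.sk k) (c.tk k) / c.l1) :=
        mul_le_mul_of_nonneg_left h1 hl.le
    _ = ∑ k ∈ Finset.range (n+1), c.sig k * dm1 (c.tau k) (c.sk k) (c.tk k) := by
        rw [Finset.mul_sum]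
        apply Finset.sum_congr rfl
        intro k _
        field_simp
  have h4 : c.e1 * ‖c.wbn n‖ ≤ ∑ k ∈ Finset.range (n+1),
      c.sig k * dm2 (c.tau k) (c.sk k) (c.tk k) := by
    calc c.e1 * ‖c.wbn n‖ ≤ c.e1 * ∑ k ∈ Finset.range (n+1),
        c.sig k * (dm2 (c.tau k) (c.sk k) (c.tk k) / c.e1) :=
        mul_le_mul_of_nonneg_left h2 he.le
    _ = ∑ k ∈ Finset.range (n+1), c.sig k * dm2 (c.tau k) (c.sk k) (c.tk k) := by
        rw [Finset.mul_sum]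
        apply Finset.sum_congr rfl
        intro k _
        field_simp
  have h5 : ∑ k ∈ Finset.range (n+1), c.sig k * dm1 (c.tau k) (c.sk k) (c.tk k)
      + ∑ k ∈ Finset.range (n+1), c.sig k * dm2 (c.tau k) (c.sk k) (c.tk k)
      = ∑ k ∈ Finset.range (n+1), c.sig k := by
    rw [← Finset.sum_add_distrib]
    apply Finset.sum_congr rfl
    intro k _
    rw [← mul_add, dm1_add_dm2, mul_one]
  linarith

lemma wan_diff (n m : ℕ) (h : n ≤ m) :
    ‖c.wan m - c.wan n‖ ≤ (c.dstar / c.l1) * (1/2:ℝ)^n := by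
  have hsub : c.wan m - c.wan n = ∑ k ∈ Finset.Ico (n+1) (m+1), c.sig k • c.Avec k := by
    rw [wan, wan, Finset.sum_Ico_eq_sub _ (by omega : n+1 ≤ m+1)]
  rw [hsub]
  refine (norm_sum_le _ _).trans ?_
  have h1 : ∀ k ∈ Finset.Ico (n+1) (m+1), ‖c.sig k • c.Avec k‖ ≤ c.sig k * (1/c.l1) := by
    intro k _
    rw [norm_smul, Real.norm_eq_abs, abs_of_nonneg (c.sig_pos k).le]
    exact mul_le_mul_of_nonneg_left (c.norm_Avec' k) (c.sig_pos k).le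
  refine (Finset.sum_le_sum h1).trans ?_
  have h2 : ∑ k ∈ Finset.Ico (n+1) (m+1), c.sig k * (1/c.l1)
      = (∑ k ∈ Finset.Ico (n+1) (m+1), c.sig k) * (1/c.l1) := by
    rw [Finset.sum_mul]
  rw [h2]
  have h3 := c.sum_sig_Ico_le n m
  have hl := c.hl1
  calc (∑ k ∈ Finset.Ico (n+1) (m+1), c.sig k) * (1/c.l1)
      ≤ (c.dstar * (1/2:ℝ)^n) * (1/c.l1) := by
        apply mul_le_mul_of_nonneg_right h3 (by positivity)
  _ = (c.dstar / c.l1) * (1/2:ℝ)^n := by ring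

lemma wbn_diff (n m : ℕ) (h : n ≤ m) :
    ‖c.wbn m - c.wbn n‖ ≤ (c.dstar / c.e1) * (1/2:ℝ)^n := by
  have hsub : c.wbn m - c.wbn n = ∑ k ∈ Finset.Ico (n+1) (m+1), c.sig k • c.Bvec k := by
    rw [wbn, wbn, Finset.sum_Ico_eq_sub _ (by omega : n+1 ≤ m+1)]
  rw [hsub]
  refine (norm_sum_le _ _).trans ?_
  have h1 : ∀ k ∈ Finset.Ico (n+1) (m+1), ‖c.sig k • c.Bvec k‖ ≤ c.sig k * (1/c.e1) := by
    intro k _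
    rw [norm_smul, Real.norm_eq_abs, abs_of_nonneg (c.sig_pos k).le]
    exact mul_le_mul_of_nonneg_left (c.norm_Bvec' k) (c.sig_pos k).le
  refine (Finset.sum_le_sum h1).trans ?_
  have h2 : ∑ k ∈ Finset.Ico (n+1) (m+1), c.sig k * (1/c.e1)
      = (∑ k ∈ Finset.Ico (n+1) (m+1), c.sig k) * (1/c.e1) := by
    rw [Finset.sum_mul]
  rw [h2]
  have h3 := c.sum_sig_Ico_le n m
  have hl := c.he1
  calc (∑ k ∈ Finset.Ico (n+1) (m+1), c.sig k) * (1/c.e1)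
      ≤ (c.dstar * (1/2:ℝ)^n) * (1/c.e1) := by
        apply mul_le_mul_of_nonneg_right h3 (by positivity)
  _ = (c.dstar / c.e1) * (1/2:ℝ)^n := by ring

lemma cauchy_of_geom_diff {f : ℕ → X} {K0 : ℝ} (hK0 : 0 < K0)
    (h : ∀ n m, n ≤ m → ‖f m - f n‖ ≤ K0 * (1/2:ℝ)^n) : CauchySeq f := by
  rw [Metric.cauchySeq_iff']
  intro ε hε
  obtain ⟨K, hK⟩ := exists_pow_lt_of_lt_one (show (0:ℝ) < ε / K0 by positivity)
    (show (1/2:ℝ) < 1 by norm_num)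
  refine ⟨K, fun n hn => ?_⟩
  rw [dist_eq_norm]
  calc ‖f n - f K‖ ≤ K0 * (1/2:ℝ)^K := h K n hn
  _ < K0 * (ε / K0) := by apply mul_lt_mul_of_pos_left hK hK0
  _ = ε := by field_simp

lemma cauchy_wan : CauchySeq c.wan := by
  apply cauchy_of_geom_diff (K0 := c.dstar / c.l1)
  · have := c.hdstar; have := c.hl1; positivity
  · exact c.wan_diff

lemma cauchy_wbn : CauchySeq c.wbn := by
  apply cauchy_of_geom_diff (K0 := c.dstar / c.e1)
  · have := c.hdstar; have := c.he1; positivity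
  · exact c.wbn_diff

def walim : X := (cauchySeq_tendsto_of_complete c.cauchy_wan).choose
def wblim : X := (cauchySeq_tendsto_of_complete c.cauchy_wbn).choose

lemma walim_tendsto : Filter.Tendsto c.wan Filter.atTop (nhds c.walim) :=
  (cauchySeq_tendsto_of_complete c.cauchy_wan).choose_spec
lemma wblim_tendsto : Filter.Tendsto c.wbn Filter.atTop (nhds c.wblim) :=
  (cauchySeq_tendsto_of_complete c.cauchy_wbn).choose_spec

lemma wlim_bound : c.l1 * ‖c.walim‖ + c.e1 * ‖c.wblim‖ ≤ c.sig0 + c.dstar := by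
  have hcont : Filter.Tendsto (fun n => c.l1 * ‖c.wan n‖ + c.e1 * ‖c.wbn n‖)
      Filter.atTop (nhds (c.l1 * ‖c.walim‖ + c.e1 * ‖c.wblim‖)) := by
    apply Filter.Tendsto.add
    · exact (c.walim_tendsto.norm).const_mul c.l1
    · exact (c.wblim_tendsto.norm).const_mul c.e1
  apply le_of_tendsto hcont
  apply Filter.Eventually.of_forall
  intro n
  exact (c.wsum_bound n).trans (c.sum_sig_le n)

lemma tendsto_geom8 : Filter.Tendsto (fun n : ℕ => c.gstar * (1/8:ℝ)^n)
    Filter.atTop (nhds 0) := by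
  have h := tendsto_pow_atTop_nhds_zero_of_lt_one (by norm_num : (0:ℝ) ≤ 1/8)
    (by norm_num : (1/8:ℝ) < 1)
  simpa using h.const_mul c.gstar

lemma tendsto_geom2 (K0 : ℝ) : Filter.Tendsto (fun n : ℕ => K0 * (1/2:ℝ)^n)
    Filter.atTop (nhds 0) := by
  have h := tendsto_pow_atTop_nhds_zero_of_lt_one (by norm_num : (0:ℝ) ≤ 1/2)
    (by norm_num : (1/2:ℝ) < 1)
  simpa using h.const_mul K0

/-- main conclusion, coordinate `A`. -/
lemma normalA (hv : c.vvec ≠ 0) :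
    ((c.q * ‖c.vvec‖ ^ (c.q - 2)) • c.vvec - c.walim) ∈ frechetNormal c.A c.ylim.1 := by
  set g : X := (c.q * ‖c.vvec‖ ^ (c.q - 2)) • c.vvec with hg
  have key := fermat_abstract c.A c.ylim.1
    (fun x => c.fval (x, c.ylim.2))
    (fun n x => ∑ k ∈ Finset.range (n+1), c.sig k * c.P k ((x, c.ylim.2) - c.zs k))
    (-g) c.wan c.walim
    (fun n => c.gstar * (1/8:ℝ)^n) (fun n => (c.dstar / c.l1) * (1/2:ℝ)^n)
    c.tendsto_geom8 (tendsto_geom2 (c.dstar / c.l1)) c.walim_tendsto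
    ?hmin ?hf0 ?hFd ?htail
  · have : -(-g) - c.walim = g - c.walim := by abel
    rwa [this] at key
  case hmin =>
    intro n x hx
    have hz : (x, c.ylim.2) ∈ c.CC := by
      rw [CC, Set.mem_prod]
      exact ⟨hx, (Set.mem_prod.1 c.ylim_mem).2⟩
    have h1 := c.fermat_min n hz
    have heta : ((c.ylim.1 : X), c.ylim.2) = c.ylim := Prod.mk.eta
    have hSy : c.S n c.ylim = c.fval (c.ylim.1, c.ylim.2)
        + ∑ k ∈ Finset.range (n+1), c.sig k * c.P k ((c.ylim.1, c.ylim.2) - c.zs k) := by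
      rw [heta]; rfl
    have hSz : c.S n (x, c.ylim.2) = c.fval (x, c.ylim.2)
        + ∑ k ∈ Finset.range (n+1), c.sig k * c.P k ((x, c.ylim.2) - c.zs k) := rfl
    rw [hSy, hSz] at h1
    linarith
  case hf0 =>
    -- f0 x = ‖ylim.2 - x + u‖ ^ q
    have haff : HasFDerivAt (fun x : X => c.ylim.2 - x + c.u)
        ((0 : X →L[ℝ] X) - ContinuousLinearMap.id ℝ X) c.ylim.1 := by
      have h1 : HasFDerivAt (fun x : X => (c.ylim.2 + c.u) - x)
          ((0 : X →L[ℝ] X) - ContinuousLinearMap.id ℝ X) c.ylim.1 :=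
        (hasFDerivAt_const (c.ylim.2 + c.u) c.ylim.1).sub (hasFDerivAt_id c.ylim.1)
      have hfe : (fun x : X => c.ylim.2 - x + c.u) = (fun x : X => (c.ylim.2 + c.u) - x) := by
        funext x; abel
      rw [hfe]
      exact h1
    have hrp := hasFDerivAt_rpow_norm hv c.q
    have hval : (fun x : X => c.ylim.2 - x + c.u) c.ylim.1 = c.vvec := rfl
    have hcomp := HasFDerivAt.comp (𝕜 := ℝ) c.ylim.1 (hval ▸ hrp) haff
    have hshow : ((fun x : X => ‖x‖ ^ c.q) ∘ (fun x : X => c.ylim.2 - x + c.u))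
        = fun x => c.fval (x, c.ylim.2) := rfl
    rw [hshow] at hcomp
    apply hasfd_to_eps (-g) hcomp
    intro z
    simp only [vvec, ContinuousLinearMap.coe_comp', Function.comp_apply,
      ContinuousLinearMap.coe_smul', Pi.smul_apply, ContinuousLinearMap.coe_sub',
      Pi.sub_apply, ContinuousLinearMap.zero_apply, ContinuousLinearMap.coe_id', id_eq,
      innerSL_apply_apply, zero_sub, smul_eq_mul, ContinuousLinearMap.neg_apply,
      inner_neg_right, hg, inner_neg_left, real_inner_smul_left]
    ring
  case hFd =>
    intro n
    have hterm : ∀ k, HasFDerivAt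
        (fun x : X => c.sig k * c.P k ((x, c.ylim.2) - c.zs k))
        ((c.sig k * (dm1 (c.tau k) (c.sk k) (c.tk k) * (c.l1^2 * c.sk k)⁻¹))
          • (innerSL ℝ (c.ylim.1 - (c.zs k).1) : X →L[ℝ] ℝ)) c.ylim.1 := by
      intro k
      have haff2 : HasFDerivAt (fun x : X => x - (c.zs k).1)
          (ContinuousLinearMap.id ℝ X) c.ylim.1 := (hasFDerivAt_id _).sub_const _
      have hphi := (hasFDerivAt_phi (c.tau_pos k) c.hl1 (c.ylim.1 - (c.zs k).1))
      have hphi2 := HasFDerivAt.comp (𝕜 := ℝ) c.ylim.1 hphi haff2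
      have hmmd := hasDerivAt_mm_left (c.tau_pos k) (c.tk k) (c.sk k)
      have hcomp2 := hmmd.comp_hasFDerivAt c.ylim.1 hphi2
      have hshow2 : ((fun s => mm (c.tau k) s (c.tk k))
          ∘ (phi (c.tau k) c.l1 ∘ fun x : X => x - (c.zs k).1))
          = fun x : X => c.P k ((x, c.ylim.2) - c.zs k) := rfl
      rw [hshow2] at hcomp2
      have := hcomp2.const_mul (c.sig k)
      refine this.congr_fderiv ?_
      symm
      rw [smul_smul]
      ext z
      simp [ContinuousLinearMap.smul_apply, ContinuousLinearMap.comp_apply]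
      rw [show c.sk k = phi (c.tau k) c.l1 (c.ylim.1 - (c.zs k).1) from rfl]
      ring
    have hsum := HasFDerivAt.fun_sum (fun k (_ : k ∈ Finset.range (n+1)) => hterm k)
    apply hasfd_to_eps (c.wan n) hsum
    intro z
    rw [wan, sum_inner]
    rw [ContinuousLinearMap.sum_apply]
    apply Finset.sum_congr rfl
    intro k _
    rw [ContinuousLinearMap.smul_apply, innerSL_apply_apply, Avec]
    rw [real_inner_smul_left, real_inner_smul_left]
    simp only [smul_eq_mul]
    ring
  case htail =>
    intro n m hnm x
    have hdiff : (∑ k ∈ Finset.range (m+1), c.sig k * c.P k ((x, c.ylim.2) - c.zs k))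
        - (∑ k ∈ Finset.range (n+1), c.sig k * c.P k ((x, c.ylim.2) - c.zs k))
        - ((∑ k ∈ Finset.range (m+1), c.sig k * c.P k ((c.ylim.1, c.ylim.2) - c.zs k))
          - (∑ k ∈ Finset.range (n+1), c.sig k * c.P k ((c.ylim.1, c.ylim.2) - c.zs k)))
        = ∑ k ∈ Finset.Ico (n+1) (m+1), c.sig k * (c.P k ((x, c.ylim.2) - c.zs k)
            - c.P k ((c.ylim.1, c.ylim.2) - c.zs k)) := by
      rw [← Finset.sum_Ico_eq_sub _ (by omega : n+1 ≤ m+1),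
          ← Finset.sum_Ico_eq_sub _ (by omega : n+1 ≤ m+1), ← Finset.sum_sub_distrib]
      apply Finset.sum_congr rfl
      intro k _
      ring
    rw [hdiff]
    have hper : ∀ k, c.P k ((x, c.ylim.2) - c.zs k) - c.P k ((c.ylim.1, c.ylim.2) - c.zs k)
        ≤ ‖x - c.ylim.1‖ / c.l1 := by
      intro k
      have h1 : c.P k ((x, c.ylim.2) - c.zs k) - c.P k ((c.ylim.1, c.ylim.2) - c.zs k)
          = mm (c.tau k) (phi (c.tau k) c.l1 (x - (c.zs k).1)) (c.tk k)
            - mm (c.tau k) (phi (c.tau k) c.l1 (c.ylim.1 - (c.zs k).1)) (c.tk k) := rfl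
      rw [h1]
      refine (le_abs_self _).trans ?_
      refine (mm_lip_left _ _ _ _).trans ?_
      refine (phi_lip c.hl1 _ _).trans ?_
      have : (x - (c.zs k).1) - (c.ylim.1 - (c.zs k).1) = x - c.ylim.1 := by abel
      rw [this]
    calc ∑ k ∈ Finset.Ico (n+1) (m+1), c.sig k * (c.P k ((x, c.ylim.2) - c.zs k)
            - c.P k ((c.ylim.1, c.ylim.2) - c.zs k))
        ≤ ∑ k ∈ Finset.Ico (n+1) (m+1), c.sig k * (‖x - c.ylim.1‖ / c.l1) := by
          apply Finset.sum_le_sum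
          intro k _
          exact mul_le_mul_of_nonneg_left (hper k) (c.sig_pos k).le
    _ = (∑ k ∈ Finset.Ico (n+1) (m+1), c.sig k) * (‖x - c.ylim.1‖ / c.l1) := by
          rw [Finset.sum_mul]
    _ ≤ (c.dstar * (1/2:ℝ)^n) * (‖x - c.ylim.1‖ / c.l1) := by
          apply mul_le_mul_of_nonneg_right (c.sum_sig_Ico_le n m)
          have := c.hl1; positivity
    _ = (c.dstar / c.l1) * (1/2:ℝ)^n * ‖x - c.ylim.1‖ := by
          field_simp

/-- main conclusion, coordinate `B`. -/
lemma normalB (hv : c.vvec ≠ 0) :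
    (-((c.q * ‖c.vvec‖ ^ (c.q - 2)) • c.vvec) - c.wblim) ∈ frechetNormal c.B c.ylim.2 := by
  set g : X := (c.q * ‖c.vvec‖ ^ (c.q - 2)) • c.vvec with hg
  have key := fermat_abstract c.B c.ylim.2
    (fun x => c.fval (c.ylim.1, x))
    (fun n x => ∑ k ∈ Finset.range (n+1), c.sig k * c.P k ((c.ylim.1, x) - c.zs k))
    g c.wbn c.wblim
    (fun n => c.gstar * (1/8:ℝ)^n) (fun n => (c.dstar / c.e1) * (1/2:ℝ)^n)
    c.tendsto_geom8 (tendsto_geom2 (c.dstar / c.e1)) c.wblim_tendsto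
    ?hmin ?hf0 ?hFd ?htail
  · exact key
  case hmin =>
    intro n x hx
    have hz : (c.ylim.1, x) ∈ c.CC := by
      rw [CC, Set.mem_prod]
      exact ⟨(Set.mem_prod.1 c.ylim_mem).1, hx⟩
    have h1 := c.fermat_min n hz
    have heta : ((c.ylim.1 : X), c.ylim.2) = c.ylim := Prod.mk.eta
    have hSy : c.S n c.ylim = c.fval (c.ylim.1, c.ylim.2)
        + ∑ k ∈ Finset.range (n+1), c.sig k * c.P k ((c.ylim.1, c.ylim.2) - c.zs k) := by
      rw [heta]; rfl
    have hSz : c.S n (c.ylim.1, x) = c.fval (c.ylim.1, x)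
        + ∑ k ∈ Finset.range (n+1), c.sig k * c.P k ((c.ylim.1, x) - c.zs k) := rfl
    rw [hSy, hSz] at h1
    linarith
  case hf0 =>
    have haff : HasFDerivAt (fun x : X => x - c.ylim.1 + c.u)
        (ContinuousLinearMap.id ℝ X) c.ylim.2 :=
      ((hasFDerivAt_id c.ylim.2).sub_const c.ylim.1).add_const c.u
    have hrp := hasFDerivAt_rpow_norm hv c.q
    have hval : (fun x : X => x - c.ylim.1 + c.u) c.ylim.2 = c.vvec := rfl
    have hcomp := HasFDerivAt.comp (𝕜 := ℝ) c.ylim.2 (hval ▸ hrp) haff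
    have hshow : ((fun x : X => ‖x‖ ^ c.q) ∘ (fun x : X => x - c.ylim.1 + c.u))
        = fun x => c.fval (c.ylim.1, x) := rfl
    rw [hshow] at hcomp
    apply hasfd_to_eps g hcomp
    intro z
    simp only [vvec, ContinuousLinearMap.coe_comp', Function.comp_apply,
      ContinuousLinearMap.coe_smul', Pi.smul_apply, ContinuousLinearMap.coe_id', id_eq,
      innerSL_apply_apply, smul_eq_mul, hg, real_inner_smul_left]
  case hFd =>
    intro n
    have hterm : ∀ k, HasFDerivAt
        (fun x : X => c.sig k * c.P k ((c.ylim.1, x) - c.zs k))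
        ((c.sig k * (dm2 (c.tau k) (c.sk k) (c.tk k) * (c.e1^2 * c.tk k)⁻¹))
          • (innerSL ℝ (c.ylim.2 - (c.zs k).2) : X →L[ℝ] ℝ)) c.ylim.2 := by
      intro k
      have haff2 : HasFDerivAt (fun x : X => x - (c.zs k).2)
          (ContinuousLinearMap.id ℝ X) c.ylim.2 := (hasFDerivAt_id _).sub_const _
      have hphi := (hasFDerivAt_phi (c.tau_pos k) c.he1 (c.ylim.2 - (c.zs k).2))
      have hphi2 := HasFDerivAt.comp (𝕜 := ℝ) c.ylim.2 hphi haff2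
      have hmmd := hasDerivAt_mm_right (c.tau_pos k) (c.sk k) (c.tk k)
      have hcomp2 := hmmd.comp_hasFDerivAt c.ylim.2 hphi2
      have hshow2 : ((fun s' => mm (c.tau k) (c.sk k) s')
          ∘ (phi (c.tau k) c.e1 ∘ fun x : X => x - (c.zs k).2))
          = fun x : X => c.P k ((c.ylim.1, x) - c.zs k) := rfl
      rw [hshow2] at hcomp2
      have := hcomp2.const_mul (c.sig k)
      refine this.congr_fderiv ?_
      symm
      rw [smul_smul]
      ext z
      simp [ContinuousLinearMap.smul_apply, ContinuousLinearMap.comp_apply]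
      rw [show c.tk k = phi (c.tau k) c.e1 (c.ylim.2 - (c.zs k).2) from rfl]
      ring
    have hsum := HasFDerivAt.fun_sum (fun k (_ : k ∈ Finset.range (n+1)) => hterm k)
    apply hasfd_to_eps (c.wbn n) hsum
    intro z
    rw [wbn, sum_inner]
    rw [ContinuousLinearMap.sum_apply]
    apply Finset.sum_congr rfl
    intro k _
    rw [ContinuousLinearMap.smul_apply, innerSL_apply_apply, Bvec]
    rw [real_inner_smul_left, real_inner_smul_left]
    simp only [smul_eq_mul]
    ring
  case htail =>
    intro n m hnm x
    have hdiff : (∑ k ∈ Finset.range (m+1), c.sig k * c.P k ((c.ylim.1, x) - c.zs k))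
        - (∑ k ∈ Finset.range (n+1), c.sig k * c.P k ((c.ylim.1, x) - c.zs k))
        - ((∑ k ∈ Finset.range (m+1), c.sig k * c.P k ((c.ylim.1, c.ylim.2) - c.zs k))
          - (∑ k ∈ Finset.range (n+1), c.sig k * c.P k ((c.ylim.1, c.ylim.2) - c.zs k)))
        = ∑ k ∈ Finset.Ico (n+1) (m+1), c.sig k * (c.P k ((c.ylim.1, x) - c.zs k)
            - c.P k ((c.ylim.1, c.ylim.2) - c.zs k)) := by
      rw [← Finset.sum_Ico_eq_sub _ (by omega : n+1 ≤ m+1),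
          ← Finset.sum_Ico_eq_sub _ (by omega : n+1 ≤ m+1), ← Finset.sum_sub_distrib]
      apply Finset.sum_congr rfl
      intro k _
      ring
    rw [hdiff]
    have hper : ∀ k, c.P k ((c.ylim.1, x) - c.zs k) - c.P k ((c.ylim.1, c.ylim.2) - c.zs k)
        ≤ ‖x - c.ylim.2‖ / c.e1 := by
      intro k
      have h1 : c.P k ((c.ylim.1, x) - c.zs k) - c.P k ((c.ylim.1, c.ylim.2) - c.zs k)
          = mm (c.tau k) (phi (c.tau k) c.l1 (c.ylim.1 - (c.zs k).1))
              (phi (c.tau k) c.e1 (x - (c.zs k).2))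
            - mm (c.tau k) (phi (c.tau k) c.l1 (c.ylim.1 - (c.zs k).1))
              (phi (c.tau k) c.e1 (c.ylim.2 - (c.zs k).2)) := rfl
      rw [h1]
      refine (le_abs_self _).trans ?_
      refine (mm_lip_right _ _ _ _).trans ?_
      refine (phi_lip c.he1 _ _).trans ?_
      have : (x - (c.zs k).2) - (c.ylim.2 - (c.zs k).2) = x - c.ylim.2 := by abel
      rw [this]
    calc ∑ k ∈ Finset.Ico (n+1) (m+1), c.sig k * (c.P k ((c.ylim.1, x) - c.zs k)
            - c.P k ((c.ylim.1, c.ylim.2) - c.zs k))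
        ≤ ∑ k ∈ Finset.Ico (n+1) (m+1), c.sig k * (‖x - c.ylim.2‖ / c.e1) := by
          apply Finset.sum_le_sum
          intro k _
          exact mul_le_mul_of_nonneg_left (hper k) (c.sig_pos k).le
    _ = (∑ k ∈ Finset.Ico (n+1) (m+1), c.sig k) * (‖x - c.ylim.2‖ / c.e1) := by
          rw [Finset.sum_mul]
    _ ≤ (c.dstar * (1/2:ℝ)^n) * (‖x - c.ylim.2‖ / c.e1) := by
          apply mul_le_mul_of_nonneg_right (c.sum_sig_Ico_le n m)
          have := c.he1; positivity
    _ = (c.dstar / c.e1) * (1/2:ℝ)^n * ‖x - c.ylim.2‖ := by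
          field_simp

end VCtx


end

set_option maxHeartbeats 2000000 in
/-- Hölder-type dual necessary conditions for two closed sets in a
Hilbert space with `(A−u) ∩ B = ∅`; powers are real powers (`rpow`). -/
theorem stmt15 {X : Type*} [NormedAddCommGroup X] [InnerProductSpace ℝ X]
    [CompleteSpace X]
    (A B : Set X) (hA : IsClosed A) (hB : IsClosed B)
    (xbar : X) (hxbar : xbar ∈ A ∩ B) (u : X) (ε q : ℝ) (hε : 0 < ε) (hq : 0 < q)
    (hne : ((fun z => z - u) '' A) ∩ B = ∅)
    (hd : ‖u‖ ^ q < (setDist ((fun z => z - u) '' A) B) ^ q + ε) :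
    ∀ lam > (0 : ℝ), ∀ eta > (0 : ℝ),
      ∃ a ∈ A ∩ Metric.ball xbar lam, ∃ b ∈ B ∩ Metric.ball xbar eta,
        0 < ‖b - a + u‖ ∧
        ‖b - a + u‖ ^ q < (setDist ((fun z => z - u) '' A) B) ^ q + ε ∧
        q * ‖b - a + u‖ ^ (q - 2) *
          (lam * Metric.infDist (b - a + u) (frechetNormal A a) +
            eta * Metric.infDist (a - b - u) (frechetNormal B b)) < ε := by
  intro lam hlam eta heta
  set d : ℝ := setDist ((fun z => z - u) '' A) B with hdd
  have hd0 : 0 ≤ d := setDist_nonneg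
  have hkey : ∀ z : X × X, z ∈ A ×ˢ B → d ≤ ‖z.2 - z.1 + u‖ := by
    rintro ⟨a, b⟩ ⟨ha, hb⟩
    have h1 : d ≤ ‖(a - u) - b‖ := setDist_le ⟨a, ha, rfl⟩ hb
    have h2 : ‖(a - u) - b‖ = ‖b - a + u‖ := by
      rw [← norm_neg]
      congr 1
      abel
    rwa [h2] at h1
  have hdisj' : ∀ z : X × X, z ∈ A ×ˢ B → z.2 - z.1 + u ≠ 0 := by
    rintro ⟨a, b⟩ ⟨ha, hb⟩ h0
    have h1 : b - (a - u) = 0 := by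
      rw [show b - (a - u) = b - a + u by abel]; exact h0
    have hb' : b = a - u := sub_eq_zero.mp h1
    apply Set.eq_empty_iff_forall_notMem.mp hne b
    exact ⟨⟨a, ha, hb'.symm⟩, hb⟩
  -- constants
  set e : ℝ := max (‖u‖^q - d^q) 0 with hee
  have he0 : 0 ≤ e := le_max_right _ _
  have heε : e < ε := by
    apply max_lt _ hε
    linarith
  have heu : ‖u‖^q - d^q ≤ e := le_max_left _ _
  set sig0 : ℝ := (e + ε)/2 with hsig0d
  have hsig0 : 0 < sig0 := by positivity
  have hesig : e < sig0 := by rw [hsig0d]; linarith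
  have hsige : sig0 < ε := by rw [hsig0d]; linarith
  set cc : ℝ := (1 + ε/sig0)/2 with hccd
  have hcc1 : 1 < cc := by
    rw [hccd]
    have : 1 < ε/sig0 := (one_lt_div hsig0).mpr hsige
    linarith
  have hcc0 : 0 < cc := by linarith
  have hccsig : cc * sig0 = (sig0 + ε)/2 := by
    rw [hccd]
    field_simp
  set dstar : ℝ := (ε - sig0)/(4*cc) with hdsd
  have hds : 0 < dstar := by
    rw [hdsd]
    apply div_pos (by linarith) (by linarith)
  set gstar : ℝ := (ε - e)/4 with hgsd
  have hgs : 0 < gstar := by rw [hgsd]; linarith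
  set l1 : ℝ := lam/cc with hl1d
  set e1 : ℝ := eta/cc with he1d
  have hl1 : 0 < l1 := by rw [hl1d]; positivity
  have he1 : 0 < e1 := by rw [he1d]; positivity
  -- the context
  set c : VCtx X := VCtx.mk A B hA hB u q hq l1 e1 sig0 dstar gstar hl1 he1 hsig0
    hds hgs (xbar, xbar) ⟨hxbar.1, hxbar.2⟩ with hcdef
  set y : X × X := c.ylim with hydef
  have hymem : y ∈ A ×ˢ B := c.ylim_mem
  set a : X := y.1 with hadef
  set b : X := y.2 with hbdef
  have hvy : c.vvec = b - a + u := rfl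
  have hv : b - a + u ≠ 0 := by
    rw [← hvy]
    exact hdisj' y hymem
  have hvpos : 0 < ‖b - a + u‖ := norm_pos_iff.2 hv
  have hfz0 : c.fval c.z0 = ‖u‖^q := by
    show ‖xbar - xbar + u‖ ^ q = ‖u‖^q
    congr 2
    abel
  have hfy : c.fval y = ‖b - a + u‖^q := rfl
  have hfyd : d^q ≤ c.fval y := by
    rw [hfy]
    exact Real.rpow_le_rpow hd0 (hkey y hymem) hq.le
  -- value bound
  have hval : ‖b - a + u‖^q < d^q + ε := by
    have h1 := c.fval_y_le
    rw [hfz0] at h1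
    rw [← hfy]
    have h2 : c.gstar = gstar := rfl
    rw [h2] at h1
    rw [hgsd] at h1
    calc c.fval y ≤ ‖u‖^q + (ε - e)/4 := h1
    _ ≤ d^q + e + (ε - e)/4 := by linarith
    _ < d^q + ε := by linarith
  -- ball bounds
  have hball := c.ball_est
  rw [hfz0] at hball
  have hsub1 : (y - c.z0).1 = a - xbar := rfl
  have hsub2 : (y - c.z0).2 = b - xbar := rfl
  rw [hsub1, hsub2] at hball
  have hballR : sig0 * max (‖a - xbar‖ / l1) (‖b - xbar‖ / e1) ≤ e + gstar := by
    have : (c.sig0 : ℝ) = sig0 := rfl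
    rw [this] at hball
    have h2 : (c.gstar : ℝ) = gstar := rfl
    rw [h2] at hball
    have h3 : (c.l1 : ℝ) = l1 := rfl
    have h4 : (c.e1 : ℝ) = e1 := rfl
    rw [h3, h4] at hball
    have := hfyd
    linarith
  have hmaxlt : max (‖a - xbar‖ / l1) (‖b - xbar‖ / e1) < 1 := by
    by_contra hcon
    push_neg at hcon
    have h1 : sig0 * 1 ≤ sig0 * max (‖a - xbar‖ / l1) (‖b - xbar‖ / e1) :=
      mul_le_mul_of_nonneg_left hcon hsig0.le
    rw [mul_one] at h1
    have : e + gstar < sig0 := by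
      rw [hgsd, hsig0d]
      linarith
    linarith
  have haball : a ∈ Metric.ball xbar lam := by
    rw [Metric.mem_ball, dist_eq_norm]
    have h1 : ‖a - xbar‖ / l1 < 1 := lt_of_le_of_lt (le_max_left _ _) hmaxlt
    rw [div_lt_one hl1] at h1
    calc ‖a - xbar‖ < l1 := h1
    _ < lam := by
      rw [hl1d, div_lt_iff₀ hcc0]
      nlinarith
  have hbball : b ∈ Metric.ball xbar eta := by
    rw [Metric.mem_ball, dist_eq_norm]
    have h1 : ‖b - xbar‖ / e1 < 1 := lt_of_le_of_lt (le_max_right _ _) hmaxlt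
    rw [div_lt_one he1] at h1
    calc ‖b - xbar‖ < e1 := h1
    _ < eta := by
      rw [he1d, div_lt_iff₀ hcc0]
      nlinarith
  -- normal cones
  have hNA := c.normalA (by rw [hvy]; exact hv)
  have hNB := c.normalB (by rw [hvy]; exact hv)
  rw [hvy] at hNA hNB
  set v : X := b - a + u with hvdef
  set s : ℝ := q * ‖v‖^(q - 2) with hsdef
  have hs : 0 < s := by
    rw [hsdef]
    have := Real.rpow_pos_of_pos hvpos (q-2)
    positivity
  set g : X := s • v with hgdef
  have hgA : (g - c.walim) ∈ frechetNormal A a := hNA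
  have hgB : (-g - c.wblim) ∈ frechetNormal B b := hNB
  have hsinv : 0 < s⁻¹ := by positivity
  have hmemA : s⁻¹ • (g - c.walim) ∈ frechetNormal A a := frechetNormal_smul hgA hsinv
  have hmemB : s⁻¹ • (-g - c.wblim) ∈ frechetNormal B b := frechetNormal_smul hgB hsinv
  have hsg : s⁻¹ • g = v := by
    rw [hgdef, smul_smul, inv_mul_cancel₀ hs.ne', one_smul]
  have hiA : Metric.infDist v (frechetNormal A a) ≤ s⁻¹ * ‖c.walim‖ := by
    refine (Metric.infDist_le_dist_of_mem hmemA).trans ?_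
    rw [dist_eq_norm]
    have : v - s⁻¹ • (g - c.walim) = s⁻¹ • c.walim := by
      rw [smul_sub, hsg]
      abel
    rw [this, norm_smul, Real.norm_eq_abs, abs_of_pos hsinv]
  have hiB : Metric.infDist (a - b - u) (frechetNormal B b) ≤ s⁻¹ * ‖c.wblim‖ := by
    have hab : a - b - u = -v := by rw [hvdef]; abel
    rw [hab]
    refine (Metric.infDist_le_dist_of_mem hmemB).trans ?_
    rw [dist_eq_norm]
    have : -v - s⁻¹ • (-g - c.wblim) = s⁻¹ • c.wblim := by
      rw [smul_sub, smul_neg, hsg]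
      abel
    rw [this, norm_smul, Real.norm_eq_abs, abs_of_pos hsinv]
  -- final bound
  have hwb := c.wlim_bound
  have hcl1 : (c.l1 : ℝ) = l1 := rfl
  have hce1 : (c.e1 : ℝ) = e1 := rfl
  have hcs : (c.sig0 : ℝ) = sig0 := rfl
  have hcd : (c.dstar : ℝ) = dstar := rfl
  rw [hcl1, hce1, hcs, hcd] at hwb
  have hfinal : q * ‖b - a + u‖ ^ (q - 2) *
      (lam * Metric.infDist (b - a + u) (frechetNormal A a) +
        eta * Metric.infDist (a - b - u) (frechetNormal B b)) < ε := by
    have hiA' : lam * Metric.infDist v (frechetNormal A a) ≤ lam * (s⁻¹ * ‖c.walim‖) :=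
      mul_le_mul_of_nonneg_left hiA hlam.le
    have hiB' : eta * Metric.infDist (a - b - u) (frechetNormal B b)
        ≤ eta * (s⁻¹ * ‖c.wblim‖) :=
      mul_le_mul_of_nonneg_left hiB heta.le
    have hsum : s * (lam * Metric.infDist v (frechetNormal A a) +
        eta * Metric.infDist (a - b - u) (frechetNormal B b))
        ≤ s * (lam * (s⁻¹ * ‖c.walim‖) + eta * (s⁻¹ * ‖c.wblim‖)) := by
      apply mul_le_mul_of_nonneg_left _ hs.le
      linarith
    have heq1 : s * (lam * (s⁻¹ * ‖c.walim‖) + eta * (s⁻¹ * ‖c.wblim‖))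
        = lam * ‖c.walim‖ + eta * ‖c.wblim‖ := by
      field_simp
    have heq2 : lam * ‖c.walim‖ + eta * ‖c.wblim‖ = cc * (l1 * ‖c.walim‖ + e1 * ‖c.wblim‖) := by
      rw [hl1d, he1d]
      field_simp
    have heq3 : cc * (l1 * ‖c.walim‖ + e1 * ‖c.wblim‖) ≤ cc * (sig0 + dstar) :=
      mul_le_mul_of_nonneg_left hwb hcc0.le
    have heq4 : cc * (sig0 + dstar) < ε := by
      rw [mul_add, hccsig, hdsd]
      have : cc * ((ε - sig0)/(4*cc)) = (ε - sig0)/4 := by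
        field_simp
      rw [this]
      linarith
    have : s * (lam * Metric.infDist v (frechetNormal A a) +
        eta * Metric.infDist (a - b - u) (frechetNormal B b)) < ε := by
      calc s * _ ≤ s * (lam * (s⁻¹ * ‖c.walim‖) + eta * (s⁻¹ * ‖c.wblim‖)) := hsum
      _ = lam * ‖c.walim‖ + eta * ‖c.wblim‖ := heq1
      _ = cc * (l1 * ‖c.walim‖ + e1 * ‖c.wblim‖) := heq2
      _ ≤ cc * (sig0 + dstar) := heq3
      _ < ε := heq4
    rw [hsdef] at this
    exact this
  exact ⟨a, ⟨(Set.mem_prod.1 hymem).1, haball⟩, b, ⟨(Set.mem_prod.1 hymem).2, hbball⟩,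
    hvpos, hval, hfinal⟩
end

section
/- Let A be a closed subset of a real Hilbert space X, x̄ ∈ A, ε > 0 and q > 0. Suppose b ∉ A and ‖b−x̄‖^q < d^q(b,A) + ε. Then for any λ > 0 there exists a point a ∈ A ∩ B_λ(x̄) such that ‖b−a‖^q < d^q(b,A) + ε and qλ‖b−a‖^{q−2}·d(b−a, N^F_A(a)) < ε. -/
open Filter Topology

section Helpers

variable {X : Type*} [NormedAddCommGroup X] [InnerProductSpace ℝ X]

lemma smul_mem_frechet {A : Set X} {a v : X} {t : ℝ} (ht : 0 < t)
    (hv : v ∈ frechetNormal A a) : t • v ∈ frechetNormal A a := by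
  intro ε hε
  obtain ⟨δ, hδ, h⟩ := hv (ε / t) (by positivity)
  refine ⟨δ, hδ, fun x hx hxa hxd => ?_⟩
  have := h x hx hxa hxd
  rw [real_inner_smul_left]
  calc t * inner ℝ v (x - a) ≤ t * (ε / t * ‖x - a‖) := by
        exact mul_le_mul_of_nonneg_left this ht.le
    _ = ε * ‖x - a‖ := by field_simp

lemma neg_grad_mem_frechet {A : Set X} {a g₀ : X} {G : X → ℝ}
    (hmin : ∀ x ∈ A, G a ≤ G x)
    (hG : HasFDerivAt G (innerSL ℝ g₀) a) : -g₀ ∈ frechetNormal A a := by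
  intro ε hε
  have h := hG.isLittleO.def hε
  rw [Metric.eventually_nhds_iff] at h
  obtain ⟨δ, hδ, hb⟩ := h
  refine ⟨δ, hδ, fun x hx hxa hxd => ?_⟩
  have hxd' : dist x a < δ := by rwa [dist_eq_norm]
  have h2 := hb hxd'
  simp only [innerSL_apply_apply, Real.norm_eq_abs] at h2
  rw [inner_neg_left]
  linarith [le_abs_self (G x - G a - (inner ℝ g₀ (x - a) : ℝ)), h2, hmin x hx]

lemma hasFDerivAt_norm_sub_sq (p a : X) :
    HasFDerivAt (fun x => ‖x - p‖ ^ 2) (innerSL ℝ ((2:ℝ) • (a - p))) a := by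
  have h1 : HasFDerivAt (fun x : X => x - p) (ContinuousLinearMap.id ℝ X) a :=
    (hasFDerivAt_id a).sub_const p
  have h2 := h1.inner ℝ h1
  have h3 : (fun x : X => (inner ℝ (x - p) (x - p) : ℝ)) = fun x => ‖x - p‖ ^ 2 := by
    funext x; rw [real_inner_self_eq_norm_sq]
  rw [h3] at h2
  refine h2.congr_fderiv ?_
  ext h
  simp [fderivInnerCLM_apply, real_inner_smul_left, real_inner_comm, two_mul, inner_sub_left, inner_sub_right]

lemma hasFDerivAt_sqrt_normsq (xbar a : X) {η : ℝ} (hη : 0 < η) :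
    HasFDerivAt (fun x => Real.sqrt (‖x - xbar‖ ^ 2 + η ^ 2))
      (innerSL ℝ ((Real.sqrt (‖a - xbar‖ ^ 2 + η ^ 2))⁻¹ • (a - xbar))) a := by
  have hpos : 0 < ‖a - xbar‖ ^ 2 + η ^ 2 := by positivity
  have hI : HasFDerivAt (fun x => ‖x - xbar‖ ^ 2 + η ^ 2)
      (innerSL ℝ ((2:ℝ) • (a - xbar))) a :=
    (hasFDerivAt_norm_sub_sq xbar a).add_const _
  have h := (Real.hasDerivAt_sqrt hpos.ne').comp_hasFDerivAt a hI
  have hu : 0 < Real.sqrt (‖a - xbar‖ ^ 2 + η ^ 2) := Real.sqrt_pos.2 hpos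
  refine h.congr_fderiv ?_
  ext h'
  simp only [ContinuousLinearMap.coe_smul', Pi.smul_apply, innerSL_apply_apply,
    real_inner_smul_left, smul_eq_mul]
  field_simp

lemma hasFDerivAt_rpow_normsq (b a : X) (q : ℝ) (hab : a ≠ b) :
    HasFDerivAt (fun x => (‖x - b‖ ^ 2) ^ (q/2))
      (innerSL ℝ ((q * (‖a - b‖ ^ 2) ^ (q/2 - 1)) • (a - b))) a := by
  have hab' : a - b ≠ 0 := sub_ne_zero.2 hab
  have hpos : (0:ℝ) < ‖a - b‖ ^ 2 := by
    have h0 : 0 < ‖a - b‖ := norm_pos_iff.2 hab'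
    positivity
  have h := (Real.hasDerivAt_rpow_const (p := q/2) (Or.inl hpos.ne')).comp_hasFDerivAt a
    (hasFDerivAt_norm_sub_sq b a)
  refine h.congr_fderiv ?_
  ext h'
  simp only [ContinuousLinearMap.coe_smul', Pi.smul_apply, innerSL_apply_apply,
    real_inner_smul_left, smul_eq_mul]
  ring

end Helpers

lemma sq_le_sq_imp {N B : ℝ} (hB : 0 ≤ B) (h : N ^ 2 ≤ B ^ 2) : N ≤ B := by
  nlinarith [sq_nonneg (N + B), sq_nonneg (N - B)]

set_option maxHeartbeats 2000000 in
theorem vpq {X : Type*} [NormedAddCommGroup X] [InnerProductSpace ℝ X] [CompleteSpace X]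
    (A : Set X) (hA : IsClosed A) (g : X → ℝ) (hg : Continuous g) (m : ℝ)
    (hm : ∀ x ∈ A, m ≤ g x) (x₀ : X) (hx₀ : x₀ ∈ A) (σ θ R : ℝ)
    (hσ : 0 < σ) (hθ : 0 < θ)
    (hR : ∀ x ∈ A, g x ≤ g x₀ + σ * θ ^ 2 → ‖x - x₀‖ ≤ R) :
    ∃ a ∈ A, ∃ c : X, ‖a - c‖ ≤ θ ∧ g a ≤ g x₀ + σ * R ^ 2 ∧
      ∀ x ∈ A, g a + σ * ‖a - c‖ ^ 2 ≤ g x + σ * ‖x - c‖ ^ 2 := by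
  classical
  set w : ℕ → ℝ := fun n => (2⁻¹ : ℝ) ^ n with hw_def
  set dl : ℕ → ℝ := fun n => σ * θ ^ 2 * (8⁻¹ : ℝ) ^ n with hdl_def
  have hw_pos : ∀ n, 0 < w n := fun n => by positivity
  have hdl_pos : ∀ n, 0 < dl n := fun n => by positivity
  -- the choice function
  have hchoice : ∀ (n : ℕ) (p : X × (X → ℝ)),
      ∃ y, (y ∈ A ∧ p.2 y ≤ sInf (p.2 '' A) + dl (n+1) ∧ p.2 y ≤ p.2 p.1) ∨
        ¬(∃ z, z ∈ A ∧ p.2 z ≤ sInf (p.2 '' A) + dl (n+1) ∧ p.2 z ≤ p.2 p.1) := by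
    intro n p
    by_cases hc : ∃ z, z ∈ A ∧ p.2 z ≤ sInf (p.2 '' A) + dl (n+1) ∧ p.2 z ≤ p.2 p.1
    · exact hc.imp fun z hz => Or.inl hz
    · exact ⟨p.1, Or.inr hc⟩
  set step : ℕ → (X × (X → ℝ)) → X × (X → ℝ) := fun n p =>
    ((hchoice n p).choose,
      fun x => p.2 x + σ * w (n+1) * ‖x - (hchoice n p).choose‖ ^ 2) with hstep_def
  set st : ℕ → X × (X → ℝ) :=
    fun n => Nat.rec (motive := fun _ => X × (X → ℝ)) (x₀, g) step n with hst_def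
  set xs : ℕ → X := fun n => (st n).1 with hxs_def
  set F : ℕ → X → ℝ := fun n => (st n).2 with hF_def
  have hF0 : F 0 = g := rfl
  have hxs0 : xs 0 = x₀ := rfl
  have hK4 : ∀ n, F (n+1) = fun x => F n x + σ * w (n+1) * ‖x - xs (n+1)‖ ^ 2 :=
    fun n => rfl
  -- basic invariant
  have main : ∀ n, xs n ∈ A ∧ (∀ x ∈ A, g x ≤ F n x) ∧ Continuous (F n) := by
    intro n
    induction n with
    | zero => exact ⟨hx₀, fun x _ => le_refl _, hg⟩
    | succ n ih =>
      obtain ⟨hxA, hge, hc⟩ := ih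
      have hbdd : BddBelow (F n '' A) := by
        refine ⟨m, ?_⟩
        rintro _ ⟨x, hx, rfl⟩
        exact (hm x hx).trans (hge x hx)
      have hne : (F n '' A).Nonempty := ⟨F n x₀, ⟨x₀, hx₀, rfl⟩⟩
      have hcond : ∃ z, z ∈ A ∧ F n z ≤ sInf (F n '' A) + dl (n+1) ∧ F n z ≤ F n (xs n) := by
        by_cases hc0 : F n (xs n) ≤ sInf (F n '' A) + dl (n+1)
        · exact ⟨xs n, hxA, hc0, le_refl _⟩
        · push_neg at hc0
          obtain ⟨_, ⟨y, hy, rfl⟩, hlt⟩ := exists_lt_of_csInf_lt hne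
            (lt_add_of_pos_right (sInf (F n '' A)) (hdl_pos (n+1)))
          exact ⟨y, hy, hlt.le, hlt.le.trans hc0.le⟩
      have hspec := (hchoice n (st n)).choose_spec
      have hxs1 : xs (n+1) = (hchoice n (st n)).choose := rfl
      rw [← hxs1] at hspec
      rcases hspec with hgood | hbad
      · refine ⟨hgood.1, fun x hx => ?_, ?_⟩
        · show g x ≤ F n x + σ * w (n+1) * ‖x - xs (n+1)‖ ^ 2
          have : (0:ℝ) ≤ σ * w (n+1) * ‖x - xs (n+1)‖ ^ 2 := by positivity
          linarith [hge x hx]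
        · rw [hK4 n]
          exact hc.add (continuous_const.mul ((continuous_id.sub continuous_const).norm.pow 2))
      · exact absurd hcond hbad
  -- goodness of the chosen points
  have hgood : ∀ n, xs (n+1) ∈ A ∧ F n (xs (n+1)) ≤ sInf (F n '' A) + dl (n+1) ∧
      F n (xs (n+1)) ≤ F n (xs n) := by
    intro n
    obtain ⟨hxA, hge, hc⟩ := main n
    have hbdd : BddBelow (F n '' A) := by
      refine ⟨m, ?_⟩
      rintro _ ⟨x, hx, rfl⟩
      exact (hm x hx).trans (hge x hx)
    have hne : (F n '' A).Nonempty := ⟨F n x₀, ⟨x₀, hx₀, rfl⟩⟩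
    have hcond : ∃ z, z ∈ A ∧ F n z ≤ sInf (F n '' A) + dl (n+1) ∧ F n z ≤ F n (xs n) := by
      by_cases hc0 : F n (xs n) ≤ sInf (F n '' A) + dl (n+1)
      · exact ⟨xs n, hxA, hc0, le_refl _⟩
      · push_neg at hc0
        obtain ⟨_, ⟨y, hy, rfl⟩, hlt⟩ := exists_lt_of_csInf_lt hne
          (lt_add_of_pos_right (sInf (F n '' A)) (hdl_pos (n+1)))
        exact ⟨y, hy, hlt.le, hlt.le.trans hc0.le⟩
    have hspec := (hchoice n (st n)).choose_spec
    have hxs1 : xs (n+1) = (hchoice n (st n)).choose := rfl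
    rw [← hxs1] at hspec
    rcases hspec with hgood | hbad
    · exact hgood
    · exact absurd hcond hbad
  have hbdd : ∀ n, BddBelow (F n '' A) := by
    intro n
    refine ⟨m, ?_⟩
    rintro _ ⟨x, hx, rfl⟩
    exact (hm x hx).trans ((main n).2.1 x hx)
  clear_value st xs F
  -- monotonicity in n
  have hFmono : ∀ n x, F n x ≤ F (n+1) x := by
    intro n x
    rw [hK4 n]
    show F n x ≤ F n x + σ * w (n+1) * ‖x - xs (n+1)‖ ^ 2
    have : (0:ℝ) ≤ σ * w (n+1) * ‖x - xs (n+1)‖ ^ 2 := by positivity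
    linarith
  have hFle : ∀ n m', n ≤ m' → ∀ x, F n x ≤ F m' x := by
    intro n m' h
    induction m', h using Nat.le_induction with
    | base => exact fun x => le_refl _
    | succ m' hm' ih => exact fun x => (ih x).trans (hFmono m' x)
  -- values decrease
  have hsdec : ∀ n, F (n+1) (xs (n+2)) ≤ F n (xs (n+1)) := by
    intro n
    have h1 : F (n+1) (xs (n+2)) ≤ F (n+1) (xs (n+1)) := (hgood (n+1)).2.2
    have h2 : F (n+1) (xs (n+1)) = F n (xs (n+1)) := by
      rw [hK4 n]
      show F n (xs (n+1)) + σ * w (n+1) * ‖xs (n+1) - xs (n+1)‖ ^ 2 = F n (xs (n+1))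
      simp
    linarith
  have hsle : ∀ n m', n ≤ m' → F m' (xs (m'+1)) ≤ F n (xs (n+1)) := by
    intro n m' h
    induction m', h using Nat.le_induction with
    | base => exact le_refl _
    | succ m' hm' ih => exact (hsdec m').trans ih
  -- Cauchy estimate
  have hCB : ∀ n m', n ≤ m' → ‖xs (m'+1) - xs (n+1)‖ ≤ θ * (2⁻¹:ℝ) ^ (n+1) := by
    intro n m' h
    rcases eq_or_lt_of_le h with rfl | hlt
    · simp only [sub_self, norm_zero]
      positivity
    · have hnm : n + 1 ≤ m' := hlt
      have h1 : F (n+1) (xs (m'+1)) ≤ F m' (xs (m'+1)) := hFle _ _ hnm _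
      have h2 : F m' (xs (m'+1)) ≤ F n (xs (n+1)) := hsle n m' h
      have h3 : F n (xs (n+1)) ≤ sInf (F n '' A) + dl (n+1) := (hgood n).2.1
      have h4 : sInf (F n '' A) ≤ F n (xs (m'+1)) :=
        csInf_le (hbdd n) (Set.mem_image_of_mem _ (main (m'+1)).1)
      have h5 : F (n+1) (xs (m'+1)) =
          F n (xs (m'+1)) + σ * w (n+1) * ‖xs (m'+1) - xs (n+1)‖ ^ 2 := by
        rw [hK4 n]
      have h6 : σ * w (n+1) * ‖xs (m'+1) - xs (n+1)‖ ^ 2 ≤ dl (n+1) := by linarith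
      have h7 : dl (n+1) = σ * w (n+1) * (θ^2 * (4⁻¹:ℝ) ^ (n+1)) := by
        show σ * θ ^ 2 * (8⁻¹:ℝ) ^ (n+1) = σ * (2⁻¹:ℝ) ^ (n+1) * (θ^2 * (4⁻¹:ℝ)^(n+1))
        rw [show ((8:ℝ)⁻¹) = (2⁻¹:ℝ) * (4⁻¹:ℝ) by norm_num, mul_pow]
        ring
      have h8 : ‖xs (m'+1) - xs (n+1)‖ ^ 2 ≤ θ^2 * (4⁻¹:ℝ) ^ (n+1) := by
        have hpos : 0 < σ * w (n+1) := by positivity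
        rw [h7] at h6
        exact le_of_mul_le_mul_left (by linarith [h6]) hpos
      refine sq_le_sq_imp (by positivity) ?_
      calc ‖xs (m'+1) - xs (n+1)‖ ^ 2 ≤ θ^2 * (4⁻¹:ℝ) ^ (n+1) := h8
        _ = (θ * (2⁻¹:ℝ) ^ (n+1)) ^ 2 := by
            rw [mul_pow, ← pow_mul, mul_comm (n+1) 2, pow_mul]
            norm_num
  -- Cauchy sequence and limit
  have hcauchy : CauchySeq (fun n => xs (n+1)) := by
    apply cauchySeq_of_le_tendsto_0 (fun N => 2 * (θ * (2⁻¹:ℝ) ^ (N+1)))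
    · intro n m' N hn hm'
      have d1 : dist (xs (n+1)) (xs (N+1)) ≤ θ * (2⁻¹:ℝ) ^ (N+1) := by
        rw [dist_eq_norm]; exact hCB N n hn
      have d2 : dist (xs (m'+1)) (xs (N+1)) ≤ θ * (2⁻¹:ℝ) ^ (N+1) := by
        rw [dist_eq_norm]; exact hCB N m' hm'
      calc dist (xs (n+1)) (xs (m'+1)) ≤
          dist (xs (n+1)) (xs (N+1)) + dist (xs (m'+1)) (xs (N+1)) := dist_triangle_right _ _ _
        _ ≤ 2 * (θ * (2⁻¹:ℝ) ^ (N+1)) := by linarith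
    · have hgeo : Filter.Tendsto (fun N : ℕ => (2⁻¹:ℝ) ^ N) atTop (nhds 0) :=
        tendsto_pow_atTop_nhds_zero_of_lt_one (by norm_num) (by norm_num)
      have : Filter.Tendsto (fun N : ℕ => 2 * (θ * ((2⁻¹:ℝ) ^ N * 2⁻¹))) atTop (nhds 0) := by
        have := (hgeo.mul_const (2⁻¹:ℝ)).const_mul θ |>.const_mul 2
        simpa using this
      convert this using 2 with N
      rw [pow_succ]
  obtain ⟨a, ha⟩ := cauchySeq_tendsto_of_complete hcauchy
  have haA : a ∈ A := hA.mem_of_tendsto ha (Filter.Eventually.of_forall fun n => (main (n+1)).1)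
  have hdist_a : ∀ n, ‖a - xs (n+1)‖ ≤ θ * (2⁻¹:ℝ) ^ (n+1) := by
    intro n
    have h1 : Filter.Tendsto (fun m => ‖xs (m+1) - xs (n+1)‖) atTop (nhds ‖a - xs (n+1)‖) :=
      ((continuous_id.sub continuous_const).norm.tendsto a).comp ha
    refine le_of_tendsto h1 ?_
    filter_upwards [Filter.eventually_ge_atTop n] with m' hm'
    exact hCB n m' hm'
  -- center bounds
  have hgb : ∀ n, g (xs (n+1)) ≤ g x₀ + σ * θ ^ 2 := by
    intro n
    have h1 : g (xs (n+1)) ≤ F n (xs (n+1)) := (main n).2.1 _ (main (n+1)).1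
    have h2 : F n (xs (n+1)) ≤ F 0 (xs 1) := hsle 0 n (Nat.zero_le n)
    have h3 : F 0 (xs 1) ≤ sInf (F 0 '' A) + dl 1 := (hgood 0).2.1
    have h4 : sInf (F 0 '' A) ≤ F 0 x₀ := csInf_le (hbdd 0) (Set.mem_image_of_mem _ hx₀)
    have h5 : F 0 x₀ = g x₀ := by rw [hF0]
    have h6 : dl 1 ≤ σ * θ ^ 2 := by
      show σ * θ ^ 2 * (8⁻¹:ℝ) ^ 1 ≤ σ * θ ^ 2
      nlinarith [mul_pos hσ (pow_pos hθ 2)]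
    linarith
  have hcenter : ∀ n, ‖xs (n+1) - x₀‖ ≤ R := fun n => hR _ (main (n+1)).1 (hgb n)
  have hR0 : 0 ≤ R := le_trans (norm_nonneg _) (hcenter 0)
  have hxs_norm : ∀ n, ‖xs (n+1)‖ ≤ ‖x₀‖ + R := by
    intro n
    calc ‖xs (n+1)‖ = ‖xs (n+1) - x₀ + x₀‖ := by rw [sub_add_cancel]
      _ ≤ ‖xs (n+1) - x₀‖ + ‖x₀‖ := norm_add_le _ _
      _ ≤ ‖x₀‖ + R := by linarith [hcenter n]
  -- weights are summable
  have hsum_w : Summable (fun k : ℕ => w (k+1)) := by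
    have : Summable (fun k : ℕ => (2⁻¹:ℝ) ^ k) :=
      summable_geometric_of_lt_one (by norm_num) (by norm_num)
    exact (this.mul_left (2⁻¹:ℝ)).congr (fun k => by
      show (2⁻¹:ℝ) * (2⁻¹:ℝ)^k = (2⁻¹:ℝ)^(k+1)
      rw [pow_succ]; ring)
  have hw_sum : ∑' k : ℕ, w (k+1) = 1 := by
    have h1 : ∑' k : ℕ, (2⁻¹:ℝ) * (2⁻¹:ℝ)^k = (2⁻¹:ℝ) * ∑' k : ℕ, (2⁻¹:ℝ)^k := tsum_mul_left
    have h2 : ∑' k : ℕ, (2⁻¹:ℝ)^k = (1 - 2⁻¹)⁻¹ := tsum_geometric_of_lt_one (by norm_num) (by norm_num)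
    have h3 : ∑' k : ℕ, w (k+1) = ∑' k : ℕ, (2⁻¹:ℝ) * (2⁻¹:ℝ)^k := by
      apply tsum_congr
      intro k
      show (2⁻¹:ℝ)^(k+1) = (2⁻¹:ℝ) * (2⁻¹:ℝ)^k
      rw [pow_succ]; ring
    rw [h3, h1, h2]; norm_num
  -- the center c
  have hsum_c : Summable (fun k : ℕ => w (k+1) • xs (k+1)) := by
    apply Summable.of_norm_bounded (g := fun k => w (k+1) * (‖x₀‖ + R)) (hsum_w.mul_right _)
    intro k
    rw [norm_smul, Real.norm_eq_abs, abs_of_pos (hw_pos (k+1))]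
    exact mul_le_mul_of_nonneg_left (hxs_norm k) (hw_pos (k+1)).le
  set c : X := ∑' k : ℕ, w (k+1) • xs (k+1) with hc_def
  -- the limit penalty T
  have hsumT : ∀ x : X, Summable (fun k : ℕ => w (k+1) * ‖x - xs (k+1)‖ ^ 2) := by
    intro x
    apply Summable.of_nonneg_of_le (fun k => by positivity)
      (fun k => ?_) (hsum_w.mul_right ((‖x - x₀‖ + R)^2))
    have h1 : ‖x - xs (k+1)‖ ≤ ‖x - x₀‖ + R := by
      calc ‖x - xs (k+1)‖ = ‖(x - x₀) - (xs (k+1) - x₀)‖ := by rw [sub_sub_sub_cancel_right]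
        _ ≤ ‖x - x₀‖ + ‖xs (k+1) - x₀‖ := norm_sub_le _ _
        _ ≤ ‖x - x₀‖ + R := by linarith [hcenter k]
    have h2 : ‖x - xs (k+1)‖ ^ 2 ≤ (‖x - x₀‖ + R) ^ 2 := by
      apply pow_le_pow_left₀ (norm_nonneg _) h1
    exact mul_le_mul_of_nonneg_left h2 (hw_pos (k+1)).le
  set T : X → ℝ := fun x => ∑' k : ℕ, w (k+1) * ‖x - xs (k+1)‖ ^ 2 with hT_def
  have hT_apply : ∀ x : X, T x = ∑' k : ℕ, w (k+1) * ‖x - xs (k+1)‖ ^ 2 := fun x => rfl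
  clear_value c T
  -- finite formula for F n
  have hFfin : ∀ n, F n = fun x => g x + σ * ∑ k ∈ Finset.range n, w (k+1) * ‖x - xs (k+1)‖ ^ 2 := by
    intro n
    induction n with
    | zero => funext x; simp [hF0]
    | succ n ih =>
      funext x
      rw [hK4 n]
      show F n x + σ * w (n+1) * ‖x - xs (n+1)‖ ^ 2 = _
      rw [ih, Finset.sum_range_succ]
      ring
  have hF_le_lim : ∀ n x, F n x ≤ g x + σ * T x := by
    intro n x
    rw [hFfin n]
    show g x + σ * ∑ k ∈ Finset.range n, w (k+1) * ‖x - xs (k+1)‖ ^ 2 ≤ g x + σ * T x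
    rw [hT_apply x]
    have h1 : ∑ k ∈ Finset.range n, w (k+1) * ‖x - xs (k+1)‖ ^ 2 ≤
        ∑' k : ℕ, w (k+1) * ‖x - xs (k+1)‖ ^ 2 :=
      (hsumT x).sum_le_tsum (Finset.range n) (fun k _ => by positivity)
    nlinarith
  have hF_tendsto : ∀ x, Filter.Tendsto (fun n => F n x) atTop (nhds (g x + σ * T x)) := by
    intro x
    rw [hT_apply x]
    have h1 : Filter.Tendsto
        (fun n => ∑ k ∈ Finset.range n, w (k+1) * ‖x - xs (k+1)‖ ^ 2) atTop
        (nhds (∑' k : ℕ, w (k+1) * ‖x - xs (k+1)‖ ^ 2)) :=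
      (hsumT x).hasSum.tendsto_sum_nat
    have h2 := (h1.const_mul σ).const_add (g x)
    apply h2.congr
    intro n
    rw [hFfin n]
  -- exact minimality at the limit point
  have hmin_lim : ∀ x ∈ A, g a + σ * T a ≤ g x + σ * T x := by
    intro x hx
    have h1 : ∀ n, F n a ≤ g x + σ * T x := by
      intro n
      have h2 : Filter.Tendsto (fun m => F n (xs (m+1))) atTop (nhds (F n a)) :=
        ((main n).2.2.tendsto a).comp ha
      have h3 : Filter.Tendsto (fun m : ℕ => g x + σ * T x + dl (m+1)) atTop
          (nhds (g x + σ * T x)) := by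
        have hgeo : Filter.Tendsto (fun m : ℕ => (8⁻¹:ℝ) ^ m) atTop (nhds 0) :=
          tendsto_pow_atTop_nhds_zero_of_lt_one (by norm_num) (by norm_num)
        have h4 : Filter.Tendsto (fun m : ℕ => dl (m+1)) atTop (nhds 0) := by
          have h5 := (hgeo.mul_const (8⁻¹:ℝ)).const_mul (σ * θ ^ 2)
          simp only [zero_mul, mul_zero] at h5
          apply h5.congr
          intro m
          show σ * θ ^ 2 * ((8⁻¹:ℝ) ^ m * 8⁻¹) = dl (m+1)
          rw [← pow_succ]
        have := h4.const_add (g x + σ * T x)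
        simpa using this
      refine le_of_tendsto_of_tendsto h2 h3 ?_
      filter_upwards [Filter.eventually_ge_atTop n] with m' hm'
      have e1 : F n (xs (m'+1)) ≤ F m' (xs (m'+1)) := hFle n m' hm' _
      have e2 : F m' (xs (m'+1)) ≤ sInf (F m' '' A) + dl (m'+1) := (hgood m').2.1
      have e3 : sInf (F m' '' A) ≤ F m' x := csInf_le (hbdd m') (Set.mem_image_of_mem _ hx)
      have e4 : F m' x ≤ g x + σ * T x := hF_le_lim m' x
      exact le_trans e1 (by linarith)
    exact le_of_tendsto (hF_tendsto a) (Filter.Eventually.of_forall h1)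
  -- summability of squares
  have hsum_sq : Summable (fun k : ℕ => w (k+1) * ‖xs (k+1)‖ ^ 2) := by
    apply Summable.of_nonneg_of_le (fun k => by positivity)
      (fun k => ?_) (hsum_w.mul_right ((‖x₀‖ + R)^2))
    have h2 : ‖xs (k+1)‖ ^ 2 ≤ (‖x₀‖ + R) ^ 2 :=
      pow_le_pow_left₀ (norm_nonneg _) (hxs_norm k) 2
    exact mul_le_mul_of_nonneg_left h2 (hw_pos (k+1)).le
  -- inner ℝ product sums
  have hinner : ∀ x : X, (∑' k : ℕ, (w (k+1) * (inner ℝ x (xs (k+1)) : ℝ))) = (inner ℝ x c : ℝ) ∧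
      Summable (fun k : ℕ => w (k+1) * (inner ℝ x (xs (k+1)) : ℝ)) := by
    intro x
    have h1 := hsum_c.hasSum.mapL (innerSL ℝ x)
    have h2 : (fun k : ℕ => (innerSL ℝ x) (w (k+1) • xs (k+1))) =
        fun k : ℕ => w (k+1) * (inner ℝ x (xs (k+1)) : ℝ) := by
      funext k
      simp [real_inner_smul_right]
    rw [h2, ← hc_def] at h1
    refine ⟨?_, h1.summable⟩
    simpa using h1.tsum_eq
  -- collapse identity
  have hcollapse : ∀ x : X, T x = ‖x - c‖ ^ 2 +
      ((∑' k : ℕ, w (k+1) * ‖xs (k+1)‖ ^ 2) - ‖c‖ ^ 2) := by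
    intro x
    have e1 : ∀ k : ℕ, w (k+1) * ‖x - xs (k+1)‖ ^ 2 =
        (w (k+1) * ‖x‖ ^ 2 + w (k+1) * ‖xs (k+1)‖ ^ 2) -
          2 * (w (k+1) * (inner ℝ x (xs (k+1)) : ℝ)) := by
      intro k
      rw [norm_sub_sq_real]
      ring
    have hS1 : Summable (fun k : ℕ => w (k+1) * ‖x‖ ^ 2 + w (k+1) * ‖xs (k+1)‖ ^ 2) :=
      (hsum_w.mul_right _).add hsum_sq
    have hS2 : Summable (fun k : ℕ => 2 * (w (k+1) * (inner ℝ x (xs (k+1)) : ℝ))) :=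
      (hinner x).2.mul_left 2
    have e2 : T x = (∑' k : ℕ, (w (k+1) * ‖x‖ ^ 2 + w (k+1) * ‖xs (k+1)‖ ^ 2)) -
        ∑' k : ℕ, 2 * (w (k+1) * (inner ℝ x (xs (k+1)) : ℝ)) := by
      rw [hT_apply x, tsum_congr e1, hS1.tsum_sub hS2]
    rw [e2, (hsum_w.mul_right _).tsum_add hsum_sq, tsum_mul_left,
      (hinner x).1, Summable.tsum_mul_right _ hsum_w, hw_sum]
    rw [norm_sub_sq_real]
    ring
  -- conclusion
  refine ⟨a, haA, c, ?_, ?_, ?_⟩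
  · -- ‖a - c‖ ≤ θ
    have hsum_wa : Summable (fun k : ℕ => w (k+1) • a) := hsum_w.smul_const a
    have hac : a - c = ∑' k : ℕ, w (k+1) • (a - xs (k+1)) := by
      have h1 : (fun k : ℕ => w (k+1) • (a - xs (k+1))) =
          fun k : ℕ => w (k+1) • a - w (k+1) • xs (k+1) := by
        funext k; rw [smul_sub]
      rw [h1, hsum_wa.tsum_sub hsum_c, hsum_w.tsum_smul_const, hw_sum, one_smul, ← hc_def]
    have hnsum : Summable (fun k : ℕ => ‖w (k+1) • (a - xs (k+1))‖) := by
      apply Summable.of_nonneg_of_le (fun k => norm_nonneg _) (fun k => ?_) (hsum_w.mul_right θ)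
      rw [norm_smul, Real.norm_eq_abs, abs_of_pos (hw_pos (k+1))]
      refine mul_le_mul_of_nonneg_left ?_ (hw_pos (k+1)).le
      refine (hdist_a k).trans ?_
      have h3 : (2⁻¹:ℝ) ^ (k+1) ≤ 1 := pow_le_one₀ (by norm_num) (by norm_num)
      nlinarith
    calc ‖a - c‖ = ‖∑' k : ℕ, w (k+1) • (a - xs (k+1))‖ := by rw [hac]
      _ ≤ ∑' k : ℕ, ‖w (k+1) • (a - xs (k+1))‖ := norm_tsum_le_tsum_norm hnsum
      _ ≤ ∑' k : ℕ, w (k+1) * θ := by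
          refine hnsum.tsum_le_tsum (fun k => ?_) (hsum_w.mul_right θ)
          rw [norm_smul, Real.norm_eq_abs, abs_of_pos (hw_pos (k+1))]
          refine mul_le_mul_of_nonneg_left ?_ (hw_pos (k+1)).le
          refine (hdist_a k).trans ?_
          have h3 : (2⁻¹:ℝ) ^ (k+1) ≤ 1 := pow_le_one₀ (by norm_num) (by norm_num)
          nlinarith
      _ = θ := by rw [Summable.tsum_mul_right _ hsum_w, hw_sum, one_mul]
  · -- value bound
    have hTa : 0 ≤ T a := by
      rw [hT_apply a]
      exact tsum_nonneg (fun k => by positivity)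
    have hTx₀ : T x₀ ≤ R ^ 2 := by
      rw [hT_apply x₀]
      have h1 : (∑' k : ℕ, w (k+1) * ‖x₀ - xs (k+1)‖ ^ 2) ≤ ∑' k : ℕ, w (k+1) * R ^ 2 := by
        refine (hsumT x₀).tsum_le_tsum (fun k => ?_) (hsum_w.mul_right _)
        refine mul_le_mul_of_nonneg_left ?_ (hw_pos (k+1)).le
        rw [norm_sub_rev]
        exact pow_le_pow_left₀ (norm_nonneg _) (hcenter k) 2
      rw [Summable.tsum_mul_right _ hsum_w, hw_sum, one_mul] at h1
      exact h1
    have h2 := hmin_lim x₀ hx₀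
    nlinarith
  · -- minimality
    intro x hx
    have h1 := hmin_lim x hx
    rw [hcollapse a, hcollapse x] at h1
    nlinarith

set_option maxHeartbeats 1000000 in
/-- a Hölder-type dual necessary condition for a point outside a closed
set in a Hilbert space; powers are real powers (`rpow`). -/
theorem stmt16 {X : Type*} [NormedAddCommGroup X] [InnerProductSpace ℝ X]
    [CompleteSpace X]
    (A : Set X) (hA : IsClosed A) (xbar : X) (hxbar : xbar ∈ A)
    (ε q : ℝ) (hε : 0 < ε) (hq : 0 < q) (b : X) (hb : b ∉ A)
    (hd : ‖b - xbar‖ ^ q < (Metric.infDist b A) ^ q + ε) :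
    ∀ lam > (0 : ℝ), ∃ a ∈ A ∩ Metric.ball xbar lam,
      ‖b - a‖ ^ q < (Metric.infDist b A) ^ q + ε ∧
      q * lam * ‖b - a‖ ^ (q - 2) *
        Metric.infDist (b - a) (frechetNormal A a) < ε := by
  intro lam hlam
  have hAne : A.Nonempty := ⟨xbar, hxbar⟩
  set M := Metric.infDist b A with hM_def
  have hM : 0 < M := (hA.notMem_iff_infDist_pos hAne).1 hb
  set f : X → ℝ := fun x => ‖b - x‖ ^ q with hf_def
  have hf_cont : Continuous f := by
    apply Continuous.rpow_const (by fun_prop) (fun x => Or.inr hq.le)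
  have hmA : ∀ x ∈ A, M ^ q ≤ f x := by
    intro x hx
    apply Real.rpow_le_rpow hM.le ?_ hq.le
    rw [← dist_eq_norm]
    exact Metric.infDist_le_dist_of_mem hx
  set D : ℝ := f xbar - M ^ q with hD_def
  have hD0 : 0 ≤ D := by
    have := hmA xbar hxbar
    simp only [hD_def]
    linarith
  have hDe : D < ε := by
    have : f xbar < M ^ q + ε := hd
    simp only [hD_def]
    linarith
  set s : ℝ := (D + ε) / (2 * lam) with hs_def
  have hs : 0 < s := by positivity
  have hslam : s * lam = (D + ε) / 2 := by
    rw [hs_def]; field_simp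
  set γ : ℝ := (ε - D) / 2 with hγ_def
  have hγ : 0 < γ := by simp only [hγ_def]; linarith
  set η : ℝ := min (γ / (4 * s)) (lam / 2) with hη_def
  have hη : 0 < η := lt_min (by positivity) (by positivity)
  have hη_s : s * η ≤ γ / 4 := by
    have h1 : η ≤ γ / (4 * s) := min_le_left _ _
    calc s * η ≤ s * (γ / (4 * s)) := mul_le_mul_of_nonneg_left h1 hs.le
      _ = γ / 4 := by field_simp
  set Rm : ℝ := η + (D + 1) / s with hRm_def
  have hRm0 : 0 < Rm := by positivity
  set σ : ℝ := min 1 (min (γ / (4 * (Rm ^ 2 + 1))) (γ / (4 * (lam + 1)))) with hσ_def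
  have hσ : 0 < σ := lt_min one_pos (lt_min (by positivity) (by positivity))
  have hσ1 : σ ≤ 1 := min_le_left _ _
  have hσRm : σ * (Rm ^ 2 + 1) ≤ γ / 4 := by
    have h1 : σ ≤ γ / (4 * (Rm ^ 2 + 1)) := le_trans (min_le_right _ _) (min_le_left _ _)
    have h2 : (0:ℝ) < Rm ^ 2 + 1 := by positivity
    calc σ * (Rm ^ 2 + 1) ≤ γ / (4 * (Rm ^ 2 + 1)) * (Rm ^ 2 + 1) :=
        mul_le_mul_of_nonneg_right h1 h2.le
      _ = γ / 4 := by field_simp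
  have hσlam : σ * (lam + 1) ≤ γ / 4 := by
    have h1 : σ ≤ γ / (4 * (lam + 1)) := le_trans (min_le_right _ _) (min_le_right _ _)
    have h2 : (0:ℝ) < lam + 1 := by positivity
    calc σ * (lam + 1) ≤ γ / (4 * (lam + 1)) * (lam + 1) :=
        mul_le_mul_of_nonneg_right h1 h2.le
      _ = γ / 4 := by field_simp
  set R : ℝ := η + (D + σ * 1 ^ 2) / s with hR_def
  have hR0 : 0 < R := by positivity
  have hRRm : R ≤ Rm := by
    simp only [hR_def, hRm_def, one_pow, mul_one]
    gcongr
  clear_value D s γ η Rm σ R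
  -- the smoothed penalized function
  set g : X → ℝ := fun x => f x + s * (Real.sqrt (‖x - xbar‖ ^ 2 + η ^ 2) - η) with hg_def
  have hsqrt_ge : ∀ y : X, ‖y‖ ≤ Real.sqrt (‖y‖ ^ 2 + η ^ 2) := by
    intro y
    have h1 : ‖y‖ = Real.sqrt (‖y‖ ^ 2) := (Real.sqrt_sq (norm_nonneg y)).symm
    rw [h1]
    apply Real.sqrt_le_sqrt
    nlinarith [sq_nonneg η, Real.sq_sqrt (sq_nonneg ‖y‖), Real.sqrt_nonneg (‖y‖^2)]
  have hpen_nonneg : ∀ x : X, 0 ≤ Real.sqrt (‖x - xbar‖ ^ 2 + η ^ 2) - η := by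
    intro x
    have h1 : η = Real.sqrt (η ^ 2) := (Real.sqrt_sq hη.le).symm
    have h2 : Real.sqrt (η ^ 2) ≤ Real.sqrt (‖x - xbar‖ ^ 2 + η ^ 2) :=
      Real.sqrt_le_sqrt (by nlinarith [sq_nonneg ‖x - xbar‖])
    linarith [h1 ▸ h2]
  have hg_cont : Continuous g := by
    apply hf_cont.add
    apply Continuous.mul continuous_const
    apply Continuous.sub ?_ continuous_const
    exact Real.continuous_sqrt.comp
      (((continuous_id.sub continuous_const).norm.pow 2).add continuous_const)
  have hg_xbar : g xbar = f xbar := by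
    have : g xbar = f xbar + s * (Real.sqrt (‖xbar - xbar‖ ^ 2 + η ^ 2) - η) := rfl
    rw [this, sub_self, norm_zero]
    norm_num
    rw [Real.sqrt_sq hη.le]
    simp
  have hm_g : ∀ x ∈ A, M ^ q ≤ g x := by
    intro x hx
    have h1 : (0:ℝ) ≤ s * (Real.sqrt (‖x - xbar‖ ^ 2 + η ^ 2) - η) :=
      mul_nonneg hs.le (hpen_nonneg x)
    have : g x = f x + s * (Real.sqrt (‖x - xbar‖ ^ 2 + η ^ 2) - η) := rfl
    rw [this]
    linarith [hmA x hx]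
  have hRprop : ∀ x ∈ A, g x ≤ g xbar + σ * 1 ^ 2 → ‖x - xbar‖ ≤ R := by
    intro x hx hgx
    rw [hg_xbar] at hgx
    have hgx' : f x + s * (Real.sqrt (‖x - xbar‖ ^ 2 + η ^ 2) - η) ≤ f xbar + σ * 1 ^ 2 := hgx
    have h1 : s * (Real.sqrt (‖x - xbar‖ ^ 2 + η ^ 2) - η) ≤ D + σ * 1 ^ 2 := by
      have h2 := hmA x hx
      have h3 : f xbar = M ^ q + D := by rw [hD_def]; ring
      linarith
    have h4 : Real.sqrt (‖x - xbar‖ ^ 2 + η ^ 2) - η ≤ (D + σ * 1 ^ 2) / s := by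
      rw [le_div_iff₀ hs]
      linarith [h1]
    calc ‖x - xbar‖ ≤ Real.sqrt (‖x - xbar‖ ^ 2 + η ^ 2) := hsqrt_ge (x - xbar)
      _ ≤ η + (D + σ * 1 ^ 2) / s := by linarith [h4]
      _ = R := by rw [hR_def]
  obtain ⟨a, haA, c, hac, hval, hmin⟩ :=
    vpq A hA g hg_cont (M ^ q) hm_g xbar hxbar σ 1 R hσ one_pos hRprop
  have hfa_ge : M ^ q ≤ f a := hmA a haA
  have hval' : f a + s * (Real.sqrt (‖a - xbar‖ ^ 2 + η ^ 2) - η) ≤ f xbar + σ * R ^ 2 := by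
    rw [hg_xbar] at hval
    exact hval
  have hσR2 : σ * R ^ 2 ≤ γ / 4 := by
    have h1 : σ * R ^ 2 ≤ σ * (Rm ^ 2 + 1) := by
      apply mul_le_mul_of_nonneg_left ?_ hσ.le
      nlinarith [hRRm, hR0]
    linarith [hσRm]
  have hfxbar : f xbar = M ^ q + D := by rw [hD_def]; ring
  have hfa : f a < M ^ q + ε := by
    have h1 : (0:ℝ) ≤ s * (Real.sqrt (‖a - xbar‖ ^ 2 + η ^ 2) - η) :=
      mul_nonneg hs.le (hpen_nonneg a)
    have hγε : D + γ < ε := by rw [hγ_def]; linarith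
    linarith
  have h_loc : ‖a - xbar‖ < lam := by
    have h1 : s * (Real.sqrt (‖a - xbar‖ ^ 2 + η ^ 2) - η) ≤ D + σ * R ^ 2 := by
      linarith
    have h2 : s * ‖a - xbar‖ ≤ s * η + (D + σ * R ^ 2) := by
      have h3 := hsqrt_ge (a - xbar)
      nlinarith [h1, hs]
    have h4 : s * lam = D + γ := by rw [hslam, hγ_def]; ring
    have h5 : s * ‖a - xbar‖ < s * lam := by
      rw [h4]
      linarith [hη_s, hσR2, hγ]
    exact lt_of_mul_lt_mul_left h5 hs.le
  -- geometry / derivative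
  have hab : a ≠ b := fun h => hb (h ▸ haA)
  have hba : b - a ≠ 0 := sub_ne_zero.2 (Ne.symm hab)
  have hr : 0 < ‖b - a‖ := norm_pos_iff.2 hba
  set u : ℝ := Real.sqrt (‖a - xbar‖ ^ 2 + η ^ 2) with hu_def
  have hu : 0 < u := Real.sqrt_pos.2 (by positivity)
  have hf_eq : f = fun x => (‖x - b‖ ^ 2) ^ (q / 2) := by
    funext x
    show ‖b - x‖ ^ q = (‖x - b‖ ^ 2) ^ (q / 2)
    rw [norm_sub_rev b x]
    rw [← Real.rpow_natCast ‖x - b‖ 2, ← Real.rpow_mul (norm_nonneg _)]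
    norm_num
    congr 1
    ring
  have hsc : ((‖a - b‖ ^ 2 : ℝ)) ^ (q / 2 - 1) = ‖b - a‖ ^ (q - 2) := by
    rw [norm_sub_rev a b]
    rw [← Real.rpow_natCast ‖b - a‖ 2, ← Real.rpow_mul (norm_nonneg _)]
    norm_num
    congr 1
    ring
  have hf_deriv : HasFDerivAt f (innerSL ℝ ((q * ‖b - a‖ ^ (q - 2)) • (a - b))) a := by
    rw [hf_eq]
    have h := hasFDerivAt_rpow_normsq b a q hab
    rw [hsc] at h
    exact h
  have hψ_deriv : HasFDerivAt (fun x => Real.sqrt (‖x - xbar‖ ^ 2 + η ^ 2))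
      (innerSL ℝ (u⁻¹ • (a - xbar))) a := hasFDerivAt_sqrt_normsq xbar a hη
  have hsq_deriv : HasFDerivAt (fun x => ‖x - c‖ ^ 2) (innerSL ℝ ((2:ℝ) • (a - c))) a :=
    hasFDerivAt_norm_sub_sq c a
  set g₀ : X := (q * ‖b - a‖ ^ (q - 2)) • (a - b) + s • (u⁻¹ • (a - xbar)) +
    σ • ((2:ℝ) • (a - c)) with hg₀_def
  have hG_deriv : HasFDerivAt (fun x => g x + σ * ‖x - c‖ ^ 2) (innerSL ℝ g₀) a := by
    have h1 := (hf_deriv.add (((hψ_deriv).sub_const η).const_mul s)).add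
      (hsq_deriv.const_mul σ)
    have h2 : (fun x => f x + s * (Real.sqrt (‖x - xbar‖ ^ 2 + η ^ 2) - η) + σ * ‖x - c‖ ^ 2) =
        fun x => g x + σ * ‖x - c‖ ^ 2 := rfl
    rw [← h2]
    refine h1.congr_fderiv ?_
    ext y
    simp only [hg₀_def, innerSL_apply_apply, ContinuousLinearMap.add_apply,
      ContinuousLinearMap.coe_smul', Pi.smul_apply, smul_eq_mul,
      inner_add_left, real_inner_smul_left]
  have hvmem : -g₀ ∈ frechetNormal A a := by
    apply neg_grad_mem_frechet (G := fun x => g x + σ * ‖x - c‖ ^ 2) ?_ hG_deriv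
    intro x hx
    exact hmin x hx
  have hqr : 0 < q * ‖b - a‖ ^ (q - 2) := mul_pos hq (Real.rpow_pos_of_pos hr _)
  set t : ℝ := (q * ‖b - a‖ ^ (q - 2))⁻¹ with ht_def
  have ht : 0 < t := inv_pos.2 hqr
  have htv : t • (-g₀) ∈ frechetNormal A a := smul_mem_frechet ht hvmem
  have hdist_bound : Metric.infDist (b - a) (frechetNormal A a) ≤ t * (s + 2 * σ) := by
    refine le_trans (Metric.infDist_le_dist_of_mem htv) ?_
    rw [dist_eq_norm]
    have h1 : t • ((q * ‖b - a‖ ^ (q - 2)) • (a - b)) = -(b - a) := by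
      rw [smul_smul, ht_def, inv_mul_cancel₀ hqr.ne', one_smul]
      abel
    have hexp : (b - a) - t • (-g₀) =
        t • (s • (u⁻¹ • (a - xbar)) + σ • ((2:ℝ) • (a - c))) := by
      rw [smul_neg, sub_neg_eq_add, hg₀_def, smul_add, smul_add, h1, smul_add]
      abel
    rw [hexp, norm_smul, Real.norm_eq_abs, abs_of_pos ht]
    refine mul_le_mul_of_nonneg_left ?_ ht.le
    refine (norm_add_le _ _).trans ?_
    have e1 : ‖u⁻¹ • (a - xbar)‖ ≤ 1 := by
      rw [norm_smul, Real.norm_eq_abs, abs_of_pos (inv_pos.2 hu)]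
      rw [inv_mul_le_iff₀ hu, mul_one]
      exact hsqrt_ge (a - xbar)
    have e2 : ‖(2:ℝ) • (a - c)‖ ≤ 2 := by
      rw [norm_smul, Real.norm_eq_abs]
      norm_num
      linarith [hac]
    have f1 : ‖s • (u⁻¹ • (a - xbar))‖ ≤ s * 1 := by
      rw [norm_smul, Real.norm_eq_abs, abs_of_pos hs]
      exact mul_le_mul_of_nonneg_left e1 hs.le
    have f2 : ‖σ • ((2:ℝ) • (a - c))‖ ≤ σ * 2 := by
      rw [norm_smul, Real.norm_eq_abs, abs_of_pos hσ]
      exact mul_le_mul_of_nonneg_left e2 hσ.le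
    linarith
  refine ⟨a, ⟨haA, ?_⟩, ?_, ?_⟩
  · rw [Metric.mem_ball, dist_eq_norm]
    exact h_loc
  · exact hfa
  · calc q * lam * ‖b - a‖ ^ (q - 2) * Metric.infDist (b - a) (frechetNormal A a)
        ≤ q * lam * ‖b - a‖ ^ (q - 2) * (t * (s + 2 * σ)) := by
          apply mul_le_mul_of_nonneg_left hdist_bound (by positivity)
      _ = lam * (s + 2 * σ) := by
          rw [ht_def]
          field_simp
      _ < ε := by
          have h1 : σ * lam + σ = σ * (lam + 1) := by ring
          have h2 : lam * s = D + γ := by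
            rw [mul_comm, hslam, hγ_def]; ring
          have h3 : lam * (s + 2 * σ) = lam * s + 2 * (σ * lam) := by ring
          rw [h3, h2]
          have h4 : γ = (ε - D) / 2 := hγ_def
          linarith [hσlam, hσ, hDe]
end
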